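/- Fix I = {3124, 42153, 24153}. For each n ≥ 2 and each k ≥ 1, the number of permutations π in 𝔖^L_{n,3}(I) with ides(π) = k equals Σ_{m=2}^{n−1} Σ_{i=0}^{k−1} (number of σ ∈ 𝔖_m(I) with 1 < σ_m < m and ides(σ) = i) · (number of μ ∈ 𝔖_{n−m}(I) with ides(μ) = k − 1 − i), where σ_m denotes the last entry of σ. -/

import Mathlib

/-- A word `w` contains the pattern `p`: there is an increasing choice of positions
whose entries are order-isomorphic to `p`. -/
def PatContains {n k : ℕ} (w : Fin n → ℕ) (p : Fin k → ℕ) : Prop :=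
  ∃ f : Fin k → Fin n, StrictMono f ∧
    (∀ a b : Fin k, w (f a) < w (f b) ↔ p a < p b) ∧
    (∀ a b : Fin k, w (f a) = w (f b) ↔ p a = p b)

/-- A word `w` avoids the pattern `p`. -/
def PatAvoids {n k : ℕ} (w : Fin n → ℕ) (p : Fin k → ℕ) : Prop := ¬ PatContains w p

/-- The number of ascents of a word: positions `i` with `w i < w (i+1)`. -/
noncomputable def ascNum {n : ℕ} (w : Fin n → ℕ) : ℕ :=
  Nat.card {q : Fin n × Fin n // (q.2 : ℕ) = (q.1 : ℕ) + 1 ∧ w q.1 < w q.2}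

/-- The number of descents of a word: positions `i` with `w i > w (i+1)`. -/
noncomputable def desNum {n : ℕ} (w : Fin n → ℕ) : ℕ :=
  Nat.card {q : Fin n × Fin n // (q.2 : ℕ) = (q.1 : ℕ) + 1 ∧ w q.2 < w q.1}

/-- `ides π` is the number of descents of the inverse permutation of `π`. -/
noncomputable def ides {n : ℕ} (π : Equiv.Perm (Fin n)) : ℕ :=
  desNum (fun i => ((π.symm i : Fin n) : ℕ))

/-- A permutation (viewed as the word of its values) avoids all of
the patterns 3124, 42153, 24153. -/
def AvoidsI {n : ℕ} (π : Equiv.Perm (Fin n)) : Prop :=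
  PatAvoids (fun i => ((π i : Fin n) : ℕ)) ![3,1,2,4] ∧
  PatAvoids (fun i => ((π i : Fin n) : ℕ)) ![4,2,1,5,3] ∧
  PatAvoids (fun i => ((π i : Fin n) : ℕ)) ![2,4,1,5,3]

/-- The `i`-th letter of the word `w_π` is `L`, i.e. the entry `i+2` (1-based)
lies strictly to the left of the entry `1`.  (0-based: the value `i+1` lies to
the left of the value `0`.) -/
def permLetterL {n : ℕ} (π : Equiv.Perm (Fin n)) (i : Fin (n - 1)) : Prop :=
  π.symm ⟨(i : ℕ) + 1, by have := i.isLt; omega⟩ < π.symm ⟨0, by have := i.isLt; omega⟩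

/-- The word `w_π` has an alternating subword of length `k`. -/
def HasAltSub {n : ℕ} (π : Equiv.Perm (Fin n)) (k : ℕ) : Prop :=
  ∃ f : Fin k → Fin (n - 1), StrictMono f ∧
    ∀ a b : Fin k, (b : ℕ) = (a : ℕ) + 1 →
      ¬ (permLetterL π (f a) ↔ permLetterL π (f b))

/-- `alt(π) = k`: the longest alternating subword of `w_π` has length exactly `k`. -/
def altEq {n : ℕ} (π : Equiv.Perm (Fin n)) (k : ℕ) : Prop :=
  HasAltSub π k ∧ ¬ HasAltSub π (k + 1)

/-- The first letter of `w_π` is `L`, i.e. `π⁻¹(2) < π⁻¹(1)`. -/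
def FirstL {n : ℕ} (π : Equiv.Perm (Fin n)) : Prop :=
  ∃ a b : Fin n, (a : ℕ) = 0 ∧ (b : ℕ) = 1 ∧ π.symm b < π.symm a

/-- The first letter of `w_π` is `R`, i.e. `π⁻¹(2) > π⁻¹(1)`. -/
def FirstR {n : ℕ} (π : Equiv.Perm (Fin n)) : Prop :=
  ∃ a b : Fin n, (a : ℕ) = 0 ∧ (b : ℕ) = 1 ∧ π.symm a < π.symm b

set_option linter.unusedSectionVars false

namespace S11
open Finset Equiv

/-- natural-number version of a permutation of `Fin m` -/
def pn {m : ℕ} (σ : Equiv.Perm (Fin m)) (j : ℕ) : ℕ :=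
  if h : j < m then (σ ⟨j, h⟩ : ℕ) else j

lemma pn_lt {m : ℕ} (σ : Equiv.Perm (Fin m)) {j : ℕ} (h : j < m) : pn σ j < m := by
  simp only [pn, dif_pos h]; exact (σ ⟨j, h⟩).isLt

lemma pn_symm_pn {m : ℕ} (σ : Equiv.Perm (Fin m)) {j : ℕ} (h : j < m) :
    pn σ.symm (pn σ j) = j := by
  simp only [pn, dif_pos h, dif_pos ((σ ⟨j, h⟩).isLt)]
  simp

lemma pn_pn_symm {m : ℕ} (σ : Equiv.Perm (Fin m)) {j : ℕ} (h : j < m) :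
    pn σ (pn σ.symm j) = j := pn_symm_pn σ.symm h

lemma pn_inj {m : ℕ} (σ : Equiv.Perm (Fin m)) {j1 j2 : ℕ} (h1 : j1 < m) (h2 : j2 < m)
    (h : pn σ j1 = pn σ j2) : j1 = j2 := by
  have := congrArg (pn σ.symm) h
  rwa [pn_symm_pn σ h1, pn_symm_pn σ h2] at this

lemma pn_eq {m : ℕ} (σ : Equiv.Perm (Fin m)) (j : Fin m) : (σ j : ℕ) = pn σ (j : ℕ) := by
  simp [pn, j.isLt]

section Phi

variable (n m t : ℕ) (σ : Equiv.Perm (Fin m)) (μ : Equiv.Perm (Fin (n - m)))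

/-- forward map of the composed permutation -/
def Fv (j : ℕ) : ℕ :=
  if j < m - 1 then (if pn σ j < t then pn σ j + 1 else pn σ j + (n - m))
  else if j = m - 1 then 0
  else pn μ (j - m) + t + 1

/-- inverse map of the composed permutation -/
def Gv (v : ℕ) : ℕ :=
  if v = 0 then m - 1
  else if v ≤ t then pn σ.symm (v - 1)
  else if v ≤ t + (n - m) then m + pn μ.symm (v - t - 1)
  else pn σ.symm (v - (n - m))

variable {n m t σ μ}
variable (h2m : 2 ≤ m) (hmn : m < n) (h0t : 0 < t) (htm : t < m - 1)
  (hts : pn σ (m - 1) = t)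

include h2m hmn h0t htm hts

lemma pn_ne_t {j : ℕ} (hj : j < m - 1) : pn σ j ≠ t := by
  intro h
  have := pn_inj σ (by omega) (by omega) (h.trans hts.symm)
  omega

lemma Fv_lt {j : ℕ} (hj : j < n) : Fv n m t σ μ j < n := by
  unfold Fv
  split_ifs with h1 h2 h3
  · have := pn_lt σ (m := m) (j := j) (by omega); omega
  · have := pn_lt σ (m := m) (j := j) (by omega); omega
  · omega
  · have := pn_lt μ (j := j - m) (by omega); omega

lemma Gv_lt {v : ℕ} (hv : v < n) : Gv n m t σ μ v < n := by
  unfold Gv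
  split_ifs with h1 h2 h3
  · omega
  · have := pn_lt σ.symm (m := m) (j := v - 1) (by omega); omega
  · have := pn_lt μ.symm (j := v - t - 1) (by omega); omega
  · have := pn_lt σ.symm (m := m) (j := v - (n - m)) (by omega); omega

lemma symm_pn_ne {v : ℕ} (hv : v < m) (hvt : v ≠ t) : pn σ.symm v ≠ m - 1 := by
  intro h
  have : pn σ (pn σ.symm v) = v := pn_pn_symm σ hv
  rw [h, hts] at this; omega

lemma Gv_Fv {j : ℕ} (hj : j < n) : Gv n m t σ μ (Fv n m t σ μ j) = j := by
  by_cases h1 : j < m - 1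
  · have hlt := pn_lt σ (m := m) (j := j) (by omega)
    have hne := pn_ne_t h2m hmn h0t htm hts h1
    by_cases h2 : pn σ j < t
    · have hF : Fv n m t σ μ j = pn σ j + 1 := by unfold Fv; rw [if_pos h1, if_pos h2]
      rw [hF]
      unfold Gv
      rw [if_neg (by omega), if_pos (by omega),
        show pn σ j + 1 - 1 = pn σ j from by omega]
      exact pn_symm_pn σ (by omega)
    · have hF : Fv n m t σ μ j = pn σ j + (n - m) := by unfold Fv; rw [if_pos h1, if_neg h2]
      rw [hF]
      unfold Gv
      rw [if_neg (by omega), if_neg (by omega), if_neg (by omega),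
        show pn σ j + (n - m) - (n - m) = pn σ j from by omega]
      exact pn_symm_pn σ (by omega)
  · by_cases h2 : j = m - 1
    · have hF : Fv n m t σ μ j = 0 := by unfold Fv; rw [if_neg h1, if_pos h2]
      rw [hF]; unfold Gv; rw [if_pos rfl]; omega
    · have hlt := pn_lt μ (j := j - m) (by omega)
      have hF : Fv n m t σ μ j = pn μ (j - m) + t + 1 := by unfold Fv; rw [if_neg h1, if_neg h2]
      rw [hF]
      unfold Gv
      rw [if_neg (by omega), if_neg (by omega), if_pos (by omega),
        show pn μ (j - m) + t + 1 - t - 1 = pn μ (j - m) from by omega,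
        pn_symm_pn μ (by omega)]
      omega

lemma Fv_Gv {v : ℕ} (hv : v < n) : Fv n m t σ μ (Gv n m t σ μ v) = v := by
  by_cases h1 : v = 0
  · have hG : Gv n m t σ μ v = m - 1 := by unfold Gv; rw [if_pos h1]
    rw [hG]; unfold Fv; rw [if_neg (by omega), if_pos rfl]; omega
  · by_cases h2 : v ≤ t
    · have hlt := pn_lt σ.symm (m := m) (j := v - 1) (by omega)
      have hne := symm_pn_ne h2m hmn h0t htm hts (v := v - 1) (by omega) (by omega)
      have hG : Gv n m t σ μ v = pn σ.symm (v - 1) := by unfold Gv; rw [if_neg h1, if_pos h2]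
      rw [hG]
      have hpv : pn σ (pn σ.symm (v - 1)) = v - 1 := pn_pn_symm σ (by omega)
      unfold Fv
      rw [if_pos (by omega), hpv, if_pos (by omega)]
      omega
    · by_cases h3 : v ≤ t + (n - m)
      · have hlt := pn_lt μ.symm (j := v - t - 1) (by omega)
        have hG : Gv n m t σ μ v = m + pn μ.symm (v - t - 1) := by
          unfold Gv; rw [if_neg h1, if_neg h2, if_pos h3]
        rw [hG]
        unfold Fv
        rw [if_neg (by omega), if_neg (by omega),
          show m + pn μ.symm (v - t - 1) - m = pn μ.symm (v - t - 1) from by omega,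
          pn_pn_symm μ (by omega)]
        omega
      · have hlt := pn_lt σ.symm (m := m) (j := v - (n - m)) (by omega)
        have hne := symm_pn_ne h2m hmn h0t htm hts (v := v - (n - m)) (by omega) (by omega)
        have hG : Gv n m t σ μ v = pn σ.symm (v - (n - m)) := by
          unfold Gv; rw [if_neg h1, if_neg h2, if_neg h3]
        rw [hG]
        have hpv : pn σ (pn σ.symm (v - (n - m))) = v - (n - m) := pn_pn_symm σ (by omega)
        unfold Fv
        rw [if_pos (by omega), hpv, if_neg (by omega)]
        omega

end Phi

/-- the composed permutation -/
def Phi (n m t : ℕ) (σ : Equiv.Perm (Fin m)) (μ : Equiv.Perm (Fin (n - m)))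
    (h2m : 2 ≤ m) (hmn : m < n) (h0t : 0 < t) (htm : t < m - 1)
    (hts : pn σ (m - 1) = t) : Equiv.Perm (Fin n) where
  toFun := fun j => ⟨Fv n m t σ μ j, Fv_lt h2m hmn h0t htm hts j.isLt⟩
  invFun := fun v => ⟨Gv n m t σ μ v, Gv_lt h2m hmn h0t htm hts v.isLt⟩
  left_inv := fun j => Fin.ext (Gv_Fv h2m hmn h0t htm hts j.isLt)
  right_inv := fun v => Fin.ext (Fv_Gv h2m hmn h0t htm hts v.isLt)

lemma Phi_apply {n m t : ℕ} {σ : Equiv.Perm (Fin m)} {μ : Equiv.Perm (Fin (n - m))}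
    (h2m : 2 ≤ m) (hmn : m < n) (h0t : 0 < t) (htm : t < m - 1) (hts : pn σ (m - 1) = t)
    (j : Fin n) : ((Phi n m t σ μ h2m hmn h0t htm hts j : Fin n) : ℕ) = Fv n m t σ μ j := rfl

lemma Phi_symm_apply {n m t : ℕ} {σ : Equiv.Perm (Fin m)} {μ : Equiv.Perm (Fin (n - m))}
    (h2m : 2 ≤ m) (hmn : m < n) (h0t : 0 < t) (htm : t < m - 1) (hts : pn σ (m - 1) = t)
    (v : Fin n) :
    (((Phi n m t σ μ h2m hmn h0t htm hts).symm v : Fin n) : ℕ) = Gv n m t σ μ v := rfl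

end S11
namespace S11
open Finset Equiv

lemma strictMono3 {α} [Preorder α] (g : Fin 3 → α) (h01 : g 0 < g 1) (h12 : g 1 < g 2) :
    StrictMono g := by
  intro x y hxy
  fin_cases x <;> fin_cases y <;>
    first
      | exact absurd hxy (by decide)
      | exact h01
      | exact h12
      | exact h01.trans h12

lemma strictMono4 {α} [Preorder α] (g : Fin 4 → α) (h01 : g 0 < g 1) (h12 : g 1 < g 2)
    (h23 : g 2 < g 3) : StrictMono g := by
  intro x y hxy
  fin_cases x <;> fin_cases y <;>
    first
      | exact absurd hxy (by decide)
      | exact h01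
      | exact h12
      | exact h23
      | exact h01.trans h12
      | exact h12.trans h23
      | exact (h01.trans h12).trans h23

lemma strictMono5 {α} [Preorder α] (g : Fin 5 → α) (h01 : g 0 < g 1) (h12 : g 1 < g 2)
    (h23 : g 2 < g 3) (h34 : g 3 < g 4) : StrictMono g := by
  intro x y hxy
  fin_cases x <;> fin_cases y <;>
    first
      | exact absurd hxy (by decide)
      | exact h01
      | exact h12
      | exact h23
      | exact h34
      | exact h01.trans h12
      | exact h12.trans h23
      | exact h23.trans h34
      | exact (h01.trans h12).trans h23
      | exact (h12.trans h23).trans h34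
      | exact ((h01.trans h12).trans h23).trans h34

/-- the `j`-th letter of `w_π` is `L`, numeric version -/
def LL {n : ℕ} (π : Equiv.Perm (Fin n)) (j : ℕ) : Prop :=
  pn π.symm (j + 1) < pn π.symm 0

lemma permLetterL_iff {n : ℕ} (π : Equiv.Perm (Fin n)) (i : Fin (n - 1)) :
    permLetterL π i ↔ LL π (i : ℕ) := by
  have h1 : ((π.symm ⟨(i : ℕ) + 1, by have := i.isLt; omega⟩ : Fin n) : ℕ)
      = pn π.symm ((i : ℕ) + 1) := pn_eq _ _
  have h2 : ((π.symm ⟨0, by have := i.isLt; omega⟩ : Fin n) : ℕ)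
      = pn π.symm 0 := pn_eq _ _
  unfold permLetterL LL
  rw [Fin.lt_def, h1, h2]

/-- the structural description of `π` with `alt π = 3` and first letter `L` -/
def ShapeP {n : ℕ} (π : Equiv.Perm (Fin n)) (a b : ℕ) : Prop :=
  1 ≤ a ∧ 1 ≤ b ∧ a + b ≤ n - 2 ∧
    ∀ i : Fin (n - 1), (permLetterL π i ↔ ((i : ℕ) < a ∨ a + b ≤ (i : ℕ)))

lemma shape_hard {n : ℕ} (π : Equiv.Perm (Fin n)) (h3 : altEq π 3) (hfl : FirstL π) :
    ∃ a b : ℕ, ShapeP π a b := by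
  classical
  obtain ⟨⟨f, hf, halt⟩, hnot4⟩ := h3
  -- n ≥ 4
  have hx01 : (f 0 : ℕ) < (f 1 : ℕ) := hf (by decide)
  have hx12 : (f 1 : ℕ) < (f 2 : ℕ) := hf (by decide)
  have hn4 : 4 ≤ n := by have := (f 2).isLt; omega
  -- first letter is L
  have hL0 : LL π 0 := by
    obtain ⟨A, B, hA, hB, hlt⟩ := hfl
    have e1 : (π.symm B : ℕ) = pn π.symm 1 := by rw [pn_eq, hB]
    have e2 : (π.symm A : ℕ) = pn π.symm 0 := by rw [pn_eq, hA]
    unfold LL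
    rw [← e1, ← e2]
    exact hlt
  -- there is an R
  have hR : ∃ j, j < n - 1 ∧ ¬ LL π j := by
    by_contra hno
    push_neg at hno
    have h01 := halt 0 1 (by decide)
    exact h01 (iff_of_true
      ((permLetterL_iff π (f 0)).mpr (hno _ (f 0).isLt))
      ((permLetterL_iff π (f 1)).mpr (hno _ (f 1).isLt)))
  set a := Nat.find hR with hadef
  obtain ⟨han, haR⟩ : a < n - 1 ∧ ¬ LL π a := Nat.find_spec hR
  have hamin : ∀ j, j < a → LL π j := by
    intro j hj
    have := Nat.find_min hR hj
    push_neg at this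
    exact this (by omega)
  have ha1 : 1 ≤ a := by
    rcases Nat.eq_zero_or_pos a with h | h
    · exact absurd (h ▸ hL0) haR
    · exact h
  -- there is an L after the first R
  have hS : ∃ j, a < j ∧ j < n - 1 ∧ LL π j := by
    by_contra hno
    push_neg at hno
    have hiff : ∀ j, j < n - 1 → (LL π j ↔ j < a) := by
      intro j hj
      constructor
      · intro hLj
        by_contra hja
        rcases Nat.lt_or_ge a j with h | h
        · exact hno j h hj hLj
        · have : j = a := by omega
          exact haR (this ▸ hLj)
      · intro hja; exact hamin j hja
    have h01 := halt 0 1 (by decide)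
    have h12 := halt 1 2 (by decide)
    rw [permLetterL_iff, permLetterL_iff, hiff _ (f 0).isLt, hiff _ (f 1).isLt] at h01
    rw [permLetterL_iff, permLetterL_iff, hiff _ (f 1).isLt, hiff _ (f 2).isLt] at h12
    omega
  set s := Nat.find hS with hsdef
  obtain ⟨has, hsn, hsL⟩ : a < s ∧ s < n - 1 ∧ LL π s := Nat.find_spec hS
  have hsmin : ∀ j, a ≤ j → j < s → ¬ LL π j := by
    intro j hja hjs
    rcases Nat.eq_or_lt_of_le hja with h | h
    · exact h ▸ haR
    · have := Nat.find_min hS hjs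
      push_neg at this
      intro hLj
      have := this h (by omega)
      exact absurd hLj this
  have htail : ∀ j, s ≤ j → j < n - 1 → LL π j := by
    by_contra hno
    push_neg at hno
    obtain ⟨j, hsj, hjn, hjR⟩ := hno
    have hsj' : s < j := by
      rcases Nat.eq_or_lt_of_le hsj with h | h
      · exact absurd (h ▸ hsL) (h ▸ hjR)
      · exact h
    apply hnot4
    refine ⟨![⟨a - 1, by omega⟩, ⟨a, by omega⟩, ⟨s, by omega⟩, ⟨j, by omega⟩], ?_, ?_⟩
    · apply strictMono4 <;> simp [Fin.lt_def] <;> omega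
    · intro x y hxy
      fin_cases x <;> fin_cases y <;> simp at hxy ⊢ <;>
        rw [permLetterL_iff, permLetterL_iff]
      · intro h
        exact haR (h.mp (hamin (a - 1) (by omega)))
      · intro h
        exact haR (h.mpr hsL)
      · intro h
        exact hjR (h.mp hsL)
  refine ⟨a, s - a, ha1, by omega, by omega, ?_⟩
  intro i
  rw [permLetterL_iff]
  constructor
  · intro hLi
    by_contra hcon
    push_neg at hcon
    exact hsmin _ (by omega) (by omega) hLi
  · intro h
    rcases h with h | h
    · exact hamin _ h
    · exact htail _ (by omega) i.isLt

lemma shape_easy {n : ℕ} (π : Equiv.Perm (Fin n)) {a b : ℕ} (hs : ShapeP π a b) :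
    altEq π 3 ∧ FirstL π := by
  obtain ⟨ha, hb, hab, hL⟩ := hs
  have hn4 : 4 ≤ n := by omega
  have hLL : ∀ j (hj : j < n - 1), (LL π j ↔ (j < a ∨ a + b ≤ j)) := by
    intro j hj
    have := hL ⟨j, hj⟩
    rwa [permLetterL_iff] at this
  refine ⟨⟨?_, ?_⟩, ?_⟩
  · refine ⟨![⟨a - 1, by omega⟩, ⟨a, by omega⟩, ⟨a + b, by omega⟩], ?_, ?_⟩
    · apply strictMono3 <;> simp [Fin.lt_def] <;> omega
    · intro x y hxy
      fin_cases x <;> fin_cases y <;> simp at hxy ⊢ <;>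
        rw [permLetterL_iff, permLetterL_iff, hLL _ (by omega), hLL _ (by omega)] <;>
        simp only [Fin.val_mk] <;> omega
  · rintro ⟨f, hf, halt⟩
    have hx01 : (f 0 : ℕ) < (f 1 : ℕ) := hf (by decide)
    have hx12 : (f 1 : ℕ) < (f 2 : ℕ) := hf (by decide)
    have hx23 : (f 2 : ℕ) < (f 3 : ℕ) := hf (by decide)
    have h01 := halt 0 1 (by decide)
    have h12 := halt 1 2 (by decide)
    have h23 := halt 2 3 (by decide)
    rw [permLetterL_iff, permLetterL_iff, hLL _ (f 0).isLt, hLL _ (f 1).isLt] at h01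
    rw [permLetterL_iff, permLetterL_iff, hLL _ (f 1).isLt, hLL _ (f 2).isLt] at h12
    rw [permLetterL_iff, permLetterL_iff, hLL _ (f 2).isLt, hLL _ (f 3).isLt] at h23
    omega
  · refine ⟨⟨0, by omega⟩, ⟨1, by omega⟩, rfl, rfl, ?_⟩
    have h0 : LL π 0 := (hLL 0 (by omega)).mpr (by omega)
    unfold LL at h0
    rw [Fin.lt_def]
    have e1 : ((π.symm ⟨1, by omega⟩ : Fin n) : ℕ) = pn π.symm 1 := pn_eq _ _
    have e2 : ((π.symm ⟨0, by omega⟩ : Fin n) : ℕ) = pn π.symm 0 := pn_eq _ _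
    rw [e1, e2]
    exact h0
end S11
namespace S11
open Finset Equiv

lemma desNum_eq {n : ℕ} (w : Fin n → ℕ) (wn : ℕ → ℕ) (hw : ∀ j : Fin n, wn (j : ℕ) = w j) :
    desNum w = ∑ i ∈ Finset.range (n - 1), (if wn (i + 1) < wn i then 1 else 0) := by
  classical
  rw [desNum, Nat.card_eq_fintype_card, Fintype.card_subtype, ← Finset.card_filter]
  refine Finset.card_bij' (fun q _ => ((q : Fin n × Fin n).1 : ℕ))
    (fun i hi => (((⟨i, by simp only [Finset.mem_filter, Finset.mem_range] at hi; omega⟩ : Fin n),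
      (⟨i + 1, by simp only [Finset.mem_filter, Finset.mem_range] at hi; omega⟩ : Fin n)) :
        Fin n × Fin n)) ?_ ?_ ?_ ?_
  · intro q hq
    simp only [Finset.mem_filter, Finset.mem_univ, true_and] at hq
    simp only [Finset.mem_filter, Finset.mem_range]
    have h2 := (q.2).isLt
    constructor
    · omega
    · rw [hw q.1, show (q.1 : ℕ) + 1 = (q.2 : ℕ) from hq.1.symm, hw q.2]
      exact hq.2
  · intro i hi
    simp only [Finset.mem_filter, Finset.mem_range] at hi
    rw [Finset.mem_filter]
    refine ⟨Finset.mem_univ _, rfl, ?_⟩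
    have e1 : wn i = w ⟨i, by omega⟩ := hw ⟨i, by omega⟩
    have e2 : wn (i + 1) = w ⟨i + 1, by omega⟩ := hw ⟨i + 1, by omega⟩
    rw [← e1, ← e2]
    exact hi.2
  · intro q hq
    simp only [Finset.mem_filter, Finset.mem_univ, true_and] at hq
    have h1 : (⟨(q.1 : ℕ), by omega⟩ : Fin n) = q.1 := by ext; rfl
    have h2 : (⟨(q.1 : ℕ) + 1, by have := q.2.isLt; omega⟩ : Fin n) = q.2 := by
      ext; simp only []; omega
    exact Prod.ext h1 h2
  · intro i hi
    rfl

lemma sum_split6 (f : ℕ → ℕ) (t B N : ℕ) (h1 : 1 ≤ t) (h2 : 1 ≤ B) (h3 : t + B + 1 ≤ N) :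
    ∑ i ∈ Finset.range N, f i
      = f 0 + (∑ i ∈ Finset.range (t - 1), f (1 + i)) + f t
        + (∑ i ∈ Finset.range (B - 1), f (t + 1 + i)) + f (t + B)
        + ∑ i ∈ Finset.range (N - (t + B + 1)), f (t + B + 1 + i) := by
  have hNK : ∃ K, N - (t + B + 1) = K := ⟨N - (t + B + 1), rfl⟩
  obtain ⟨K, hK⟩ := hNK
  rw [hK, show N = 1 + ((t - 1) + (1 + ((B - 1) + (1 + K)))) from by omega]
  rw [Finset.sum_range_add, Finset.sum_range_add, Finset.sum_range_add, Finset.sum_range_add,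
    Finset.sum_range_add]
  simp only [Finset.sum_range_one]
  have r1 : (∑ i ∈ Finset.range (B - 1), f (1 + ((t - 1) + (1 + i))))
      = ∑ i ∈ Finset.range (B - 1), f (t + 1 + i) := by
    apply Finset.sum_congr rfl; intro i _; congr 1; omega
  have r2 : (∑ i ∈ Finset.range K, f (1 + ((t - 1) + (1 + ((B - 1) + (1 + i))))))
      = ∑ i ∈ Finset.range K, f (t + B + 1 + i) := by
    apply Finset.sum_congr rfl; intro i _; congr 1; omega
  rw [show 1 + ((t - 1) + 0) = t from by omega,
    show 1 + ((t - 1) + (1 + ((B - 1) + 0))) = t + B from by omega, r1, r2]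
  omega

lemma sum_split4 (g : ℕ → ℕ) (t M : ℕ) (h1 : 1 ≤ t) (h3 : t + 1 ≤ M) :
    ∑ i ∈ Finset.range M, g i
      = (∑ i ∈ Finset.range (t - 1), g i) + g (t - 1) + g t
        + ∑ i ∈ Finset.range (M - (t + 1)), g (t + 1 + i) := by
  have hMK : ∃ K, M - (t + 1) = K := ⟨M - (t + 1), rfl⟩
  obtain ⟨K, hK⟩ := hMK
  rw [hK, show M = (t - 1) + (1 + (1 + K)) from by omega]
  rw [Finset.sum_range_add, Finset.sum_range_add, Finset.sum_range_add]
  simp only [Finset.sum_range_one]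
  have r2 : (∑ i ∈ Finset.range K, g ((t - 1) + (1 + (1 + i))))
      = ∑ i ∈ Finset.range K, g (t + 1 + i) := by
    apply Finset.sum_congr rfl; intro i _; congr 1; omega
  rw [show (t - 1) + (1 + 0) = t from by omega, show (t - 1) + 0 = t - 1 from by omega, r2]
  omega

section IdesPhi

variable {n m t : ℕ} {σ : Equiv.Perm (Fin m)} {μ : Equiv.Perm (Fin (n - m))}
variable (h2m : 2 ≤ m) (hmn : m < n) (h0t : 0 < t) (htm : t < m - 1)
  (hts : pn σ (m - 1) = t)

include h2m hmn h0t htm hts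

lemma Gv_zero : Gv n m t σ μ 0 = m - 1 := by unfold Gv; rw [if_pos rfl]

lemma Gv_low {v : ℕ} (h1 : 1 ≤ v) (h2 : v ≤ t) : Gv n m t σ μ v = pn σ.symm (v - 1) := by
  unfold Gv; rw [if_neg (by omega), if_pos h2]

lemma Gv_mid {v : ℕ} (h1 : t + 1 ≤ v) (h2 : v ≤ t + (n - m)) :
    Gv n m t σ μ v = m + pn μ.symm (v - t - 1) := by
  unfold Gv; rw [if_neg (by omega), if_neg (by omega), if_pos h2]

lemma Gv_high {v : ℕ} (h1 : t + (n - m) + 1 ≤ v) : Gv n m t σ μ v = pn σ.symm (v - (n - m)) := by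
  unfold Gv; rw [if_neg (by omega), if_neg (by omega), if_neg (by omega)]

lemma Sv_t : pn σ.symm t = m - 1 := by
  rw [← hts]; exact pn_symm_pn σ (by omega)

lemma ides_Phi :
    ides (Phi n m t σ μ h2m hmn h0t htm hts) = 1 + ides σ + ides μ := by
  classical
  have hb1 : 1 ≤ n - m := by omega
  have hGv : ∀ v : Fin n, Gv n m t σ μ (v : ℕ)
      = (((Phi n m t σ μ h2m hmn h0t htm hts).symm v : Fin n) : ℕ) :=
    fun v => (Phi_symm_apply h2m hmn h0t htm hts v).symm
  have hSv : ∀ u : Fin m, pn σ.symm (u : ℕ) = ((σ.symm u : Fin m) : ℕ) :=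
    fun u => (pn_eq σ.symm u).symm
  have hMv : ∀ u : Fin (n - m), pn μ.symm (u : ℕ) = ((μ.symm u : Fin (n - m)) : ℕ) :=
    fun u => (pn_eq μ.symm u).symm
  rw [ides, desNum_eq _ _ hGv, ides, desNum_eq _ _ hSv, ides, desNum_eq _ _ hMv]
  have svlt : ∀ u, u < m → pn σ.symm u < m := fun u hu => pn_lt σ.symm hu
  have svne : ∀ u, u < m → u ≠ t → pn σ.symm u ≠ m - 1 :=
    fun u hu hut => symm_pn_ne h2m hmn h0t htm hts hu hut
  have svt : pn σ.symm t = m - 1 := Sv_t h2m hmn h0t htm hts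
  have mvlt : ∀ u, u < n - m → pn μ.symm u < n - m := fun u hu => pn_lt μ.symm hu
  set f : ℕ → ℕ := fun i => if Gv n m t σ μ (i + 1) < Gv n m t σ μ i then 1 else 0 with hfdef
  set gs : ℕ → ℕ := fun i => if pn σ.symm (i + 1) < pn σ.symm i then 1 else 0 with hgsdef
  set gm : ℕ → ℕ := fun i => if pn μ.symm (i + 1) < pn μ.symm i then 1 else 0 with hgmdef
  have c0 : f 0 = 1 := by
    have e1 : Gv n m t σ μ 1 = pn σ.symm 0 := Gv_low h2m hmn h0t htm hts (by omega) (by omega)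
    have e0 : Gv n m t σ μ 0 = m - 1 := Gv_zero h2m hmn h0t htm hts
    have := svlt 0 (by omega)
    have := svne 0 (by omega) (by omega)
    simp only [hfdef]
    rw [zero_add, e1, e0, if_pos (by omega)]
  have c1 : ∀ i, 1 ≤ i → i ≤ t - 1 → f i = gs (i - 1) := by
    intro i hi1 hi2
    have e1 : Gv n m t σ μ (i + 1) = pn σ.symm i := by
      have := Gv_low (μ := μ) h2m hmn h0t htm hts (v := i + 1) (by omega) (by omega)
      rwa [show i + 1 - 1 = i from by omega] at this
    have e2 : Gv n m t σ μ i = pn σ.symm (i - 1) :=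
      Gv_low h2m hmn h0t htm hts (by omega) (by omega)
    simp only [hfdef, hgsdef]
    rw [e1, e2, show i - 1 + 1 = i from by omega]
  have c2 : f t = 0 := by
    have e1 : Gv n m t σ μ (t + 1) = m + pn μ.symm 0 := by
      have := Gv_mid (μ := μ) h2m hmn h0t htm hts (v := t + 1) (by omega) (by omega)
      rwa [show t + 1 - t - 1 = 0 from by omega] at this
    have e2 : Gv n m t σ μ t = pn σ.symm (t - 1) :=
      Gv_low h2m hmn h0t htm hts (by omega) (by omega)
    have := svlt (t - 1) (by omega)
    simp only [hfdef]
    rw [e1, e2, if_neg (by omega)]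
  have c3 : ∀ j, 1 ≤ j → j ≤ n - m - 1 → f (t + j) = gm (j - 1) := by
    intro j h1 h2
    have e1 : Gv n m t σ μ (t + j + 1) = m + pn μ.symm j := by
      have := Gv_mid (μ := μ) h2m hmn h0t htm hts (v := t + j + 1) (by omega) (by omega)
      rwa [show t + j + 1 - t - 1 = j from by omega] at this
    have e2 : Gv n m t σ μ (t + j) = m + pn μ.symm (j - 1) := by
      have := Gv_mid (μ := μ) h2m hmn h0t htm hts (v := t + j) (by omega) (by omega)
      rwa [show t + j - t - 1 = j - 1 from by omega] at this
    simp only [hfdef, hgmdef]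
    rw [e1, e2, show j - 1 + 1 = j from by omega]
    by_cases h : pn μ.symm j < pn μ.symm (j - 1)
    · rw [if_pos (by omega), if_pos h]
    · rw [if_neg (by omega), if_neg h]
  have c4 : f (t + (n - m)) = 1 := by
    have e1 : Gv n m t σ μ (t + (n - m) + 1) = pn σ.symm (t + 1) := by
      have := Gv_high (μ := μ) h2m hmn h0t htm hts (v := t + (n - m) + 1) (by omega)
      rwa [show t + (n - m) + 1 - (n - m) = t + 1 from by omega] at this
    have e2 : Gv n m t σ μ (t + (n - m)) = m + pn μ.symm (n - m - 1) := by
      have := Gv_mid (μ := μ) h2m hmn h0t htm hts (v := t + (n - m)) (by omega) (by omega)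
      rwa [show t + (n - m) - t - 1 = n - m - 1 from by omega] at this
    have := svlt (t + 1) (by omega)
    simp only [hfdef]
    rw [e1, e2, if_pos (by omega)]
  have c5 : ∀ i, t + (n - m) + 1 ≤ i → i ≤ n - 2 → f i = gs (i - (n - m)) := by
    intro i h1 h2
    have e1 : Gv n m t σ μ (i + 1) = pn σ.symm (i - (n - m) + 1) := by
      have := Gv_high (μ := μ) h2m hmn h0t htm hts (v := i + 1) (by omega)
      rwa [show i + 1 - (n - m) = i - (n - m) + 1 from by omega] at this
    have e2 : Gv n m t σ μ i = pn σ.symm (i - (n - m)) :=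
      Gv_high h2m hmn h0t htm hts (by omega)
    simp only [hfdef, hgsdef]
    rw [e1, e2]
  have cs1 : gs (t - 1) = 0 := by
    have h1 := svlt (t - 1) (by omega)
    have h2 := svne (t - 1) (by omega) (by omega)
    simp only [hgsdef]
    rw [show t - 1 + 1 = t from by omega, svt, if_neg (by omega)]
  have cs2 : gs t = 1 := by
    have h1 := svlt (t + 1) (by omega)
    have h2 := svne (t + 1) (by omega) (by omega)
    simp only [hgsdef]
    rw [svt, if_pos (by omega)]
  rw [sum_split6 f t (n - m) (n - 1) (by omega) (by omega) (by omega),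
    sum_split4 gs t (m - 1) (by omega) (by omega)]
  have e2 : ∑ i ∈ Finset.range (t - 1), f (1 + i) = ∑ i ∈ Finset.range (t - 1), gs i := by
    apply Finset.sum_congr rfl
    intro i hi
    rw [Finset.mem_range] at hi
    rw [c1 (1 + i) (by omega) (by omega), show 1 + i - 1 = i from by omega]
  have e4 : ∑ i ∈ Finset.range (n - m - 1), f (t + 1 + i)
      = (Finset.range (n - m - 1)).sum gm := by
    apply Finset.sum_congr rfl
    intro i hi
    rw [Finset.mem_range] at hi
    rw [show t + 1 + i = t + (1 + i) from by omega, c3 (1 + i) (by omega) (by omega),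
      show 1 + i - 1 = i from by omega]
  have e6 : ∑ i ∈ Finset.range (n - 1 - (t + (n - m) + 1)), f (t + (n - m) + 1 + i)
      = ∑ i ∈ Finset.range (m - 1 - (t + 1)), gs (t + 1 + i) := by
    rw [show n - 1 - (t + (n - m) + 1) = m - 1 - (t + 1) from by omega]
    apply Finset.sum_congr rfl
    intro i hi
    rw [Finset.mem_range] at hi
    rw [c5 (t + (n - m) + 1 + i) (by omega) (by omega),
      show t + (n - m) + 1 + i - (n - m) = t + 1 + i from by omega]
  rw [c0, c2, c4, cs1, cs2, e2, e4, e6]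
  omega

end IdesPhi

end S11
namespace S11
open Finset Equiv

section Avoid

variable {n m t : ℕ} {σ : Equiv.Perm (Fin m)} {μ : Equiv.Perm (Fin (n - m))}
variable (h2m : 2 ≤ m) (hmn : m < n) (h0t : 0 < t) (htm : t < m - 1)
  (hts : pn σ (m - 1) = t)

include h2m hmn h0t htm hts

lemma Fv_cases {j : ℕ} (hj : j < n) :
    (j < m - 1 ∧ pn σ j < m ∧
       ((Fv n m t σ μ j = pn σ j + 1 ∧ pn σ j < t) ∨
        (Fv n m t σ μ j = pn σ j + (n - m) ∧ t < pn σ j)))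
    ∨ (j = m - 1 ∧ Fv n m t σ μ j = 0)
    ∨ (m ≤ j ∧ Fv n m t σ μ j = pn μ (j - m) + t + 1 ∧ pn μ (j - m) < n - m) := by
  by_cases h1 : j < m - 1
  · left
    have hlt := pn_lt σ (m := m) (j := j) (by omega)
    have hne := pn_ne_t h2m hmn h0t htm hts h1
    refine ⟨h1, hlt, ?_⟩
    by_cases h2 : pn σ j < t
    · left; exact ⟨by unfold Fv; rw [if_pos h1, if_pos h2], h2⟩
    · right; exact ⟨by unfold Fv; rw [if_pos h1, if_neg h2], by omega⟩
  · by_cases h2 : j = m - 1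
    · right; left; exact ⟨h2, by unfold Fv; rw [if_neg h1, if_pos h2]⟩
    · right; right
      refine ⟨by omega, by unfold Fv; rw [if_neg h1, if_neg h2], pn_lt μ (by omega)⟩

lemma ePhi : ∀ (j : ℕ) (hj : j < n),
    (((Phi n m t σ μ h2m hmn h0t htm hts) (⟨j, hj⟩ : Fin n) : Fin n) : ℕ) = Fv n m t σ μ j :=
  fun _ _ => rfl

omit h2m hmn h0t htm hts in
lemma eσ : ∀ (j : ℕ) (hj : j < m), ((σ (⟨j, hj⟩ : Fin m) : Fin m) : ℕ) = pn σ j :=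
  fun j hj => pn_eq σ ⟨j, hj⟩

omit h2m hmn h0t htm hts in
lemma eμ : ∀ (j : ℕ) (hj : j < n - m),
    ((μ (⟨j, hj⟩ : Fin (n - m)) : Fin (n - m)) : ℕ) = pn μ j :=
  fun j hj => pn_eq μ ⟨j, hj⟩

/-- embedding an occurrence in `μ` into `Phi` -/
lemma B1 {k : ℕ} (p : Fin k → ℕ)
    (h : PatContains (fun i => ((μ i : Fin (n - m)) : ℕ)) p) :
    PatContains (fun i => (((Phi n m t σ μ h2m hmn h0t htm hts) i : Fin n) : ℕ)) p := by
  obtain ⟨f, mono, hlt, heq⟩ := h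
  have hFv : ∀ c : Fin k, Fv n m t σ μ (m + (f c : ℕ)) = pn μ (f c : ℕ) + t + 1 := by
    intro c
    unfold Fv
    rw [if_neg (by omega), if_neg (by omega), show m + (f c : ℕ) - m = (f c : ℕ) from by omega]
  refine ⟨fun a => ⟨m + (f a : ℕ), by have := (f a).isLt; omega⟩, ?_, ?_, ?_⟩
  · intro x y hxy
    have hm : (f x : ℕ) < (f y : ℕ) := mono hxy
    rw [Fin.lt_def]
    simp only [Fin.val_mk]
    omega
  · intro a b
    have H : ((μ (f a) : Fin (n - m)) : ℕ) < ((μ (f b) : Fin (n - m)) : ℕ) ↔ p a < p b := hlt a b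
    rw [pn_eq μ (f a), pn_eq μ (f b)] at H
    show Fv n m t σ μ (m + (f a : ℕ)) < Fv n m t σ μ (m + (f b : ℕ)) ↔ _
    rw [hFv a, hFv b]
    omega
  · intro a b
    have H : ((μ (f a) : Fin (n - m)) : ℕ) = ((μ (f b) : Fin (n - m)) : ℕ) ↔ p a = p b := heq a b
    rw [pn_eq μ (f a), pn_eq μ (f b)] at H
    show Fv n m t σ μ (m + (f a : ℕ)) = Fv n m t σ μ (m + (f b : ℕ)) ↔ _
    rw [hFv a, hFv b]
    omega

/-- embedding an occurrence in `σ` into `Phi` (position `m-1` replaced by `m`) -/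
lemma B2 {k : ℕ} (p : Fin k → ℕ)
    (h : PatContains (fun i => ((σ i : Fin m) : ℕ)) p) :
    PatContains (fun i => (((Phi n m t σ μ h2m hmn h0t htm hts) i : Fin n) : ℕ)) p := by
  obtain ⟨f, mono, hlt, heq⟩ := h
  have hβ1 : Fv n m t σ μ m = pn μ 0 + t + 1 := by
    unfold Fv; rw [if_neg (by omega), if_neg (by omega), Nat.sub_self]
  have hβ2 : pn μ 0 < n - m := pn_lt μ (by omega)
  have key : ∀ c : Fin k, (f c : ℕ) < m - 1 →
      (Fv n m t σ μ (f c : ℕ) = pn σ (f c : ℕ) + 1 ∧ pn σ (f c : ℕ) < t) ∨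
      (Fv n m t σ μ (f c : ℕ) = pn σ (f c : ℕ) + (n - m) ∧ t < pn σ (f c : ℕ)
        ∧ pn σ (f c : ℕ) < m) := by
    intro c hc
    rcases Fv_cases (μ := μ) h2m hmn h0t htm hts (j := (f c : ℕ)) (by omega) with
      ⟨_, h2, h3 | h3⟩ | ⟨h1, _⟩ | ⟨h1, _⟩
    · exact Or.inl h3
    · exact Or.inr ⟨h3.1, h3.2, h2⟩
    · omega
    · omega
  have hσv : ∀ c : Fin k, ((σ (f c) : Fin m) : ℕ) = pn σ (f c : ℕ) := fun c => pn_eq σ (f c)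
  have hfm : ∀ c : Fin k, (f c : ℕ) < m := fun c => (f c).isLt
  have hst : ∀ c : Fin k, ¬ ((f c : ℕ) < m - 1) → pn σ (f c : ℕ) = t := by
    intro c hc
    have hh : (f c : ℕ) = m - 1 := by have := (f c).isLt; omega
    rw [hh, hts]
  refine ⟨fun a => if h : (f a : ℕ) < m - 1
      then ⟨(f a : ℕ), by omega⟩ else ⟨m, by omega⟩, ?_, ?_, ?_⟩
  · intro x y hxy
    have hm : (f x : ℕ) < (f y : ℕ) := mono hxy
    rw [Fin.lt_def]
    simp only []
    by_cases hx : (f x : ℕ) < m - 1 <;> by_cases hy : (f y : ℕ) < m - 1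
    · rw [dif_pos hx, dif_pos hy]; simp only [Fin.val_mk]; omega
    · rw [dif_pos hx, dif_neg hy]; simp only [Fin.val_mk]; omega
    · rw [dif_neg hx, dif_pos hy]; simp only [Fin.val_mk]; have := hfm y; omega
    · rw [dif_neg hx, dif_neg hy]; simp only [Fin.val_mk]
      have := hfm x; have := hfm y; omega
  · intro a b
    have H : ((σ (f a) : Fin m) : ℕ) < ((σ (f b) : Fin m) : ℕ) ↔ p a < p b := hlt a b
    rw [hσv a, hσv b] at H
    simp only []
    by_cases hx : (f a : ℕ) < m - 1 <;> by_cases hy : (f b : ℕ) < m - 1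
    · have k1 := key a hx; have k2 := key b hy
      rw [dif_pos hx, dif_pos hy, ePhi h2m hmn h0t htm hts, ePhi h2m hmn h0t htm hts]
      omega
    · have k1 := key a hx; have k2 := hst b hy
      rw [dif_pos hx, dif_neg hy, ePhi h2m hmn h0t htm hts, ePhi h2m hmn h0t htm hts, hβ1]
      rw [k2] at H
      omega
    · have k1 := hst a hx; have k2 := key b hy
      rw [dif_neg hx, dif_pos hy, ePhi h2m hmn h0t htm hts, ePhi h2m hmn h0t htm hts, hβ1]
      rw [k1] at H
      omega
    · have k1 := hst a hx; have k2 := hst b hy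
      rw [dif_neg hx, dif_neg hy]
      rw [k1, k2] at H
      omega
  · intro a b
    have H : ((σ (f a) : Fin m) : ℕ) = ((σ (f b) : Fin m) : ℕ) ↔ p a = p b := heq a b
    rw [hσv a, hσv b] at H
    simp only []
    by_cases hx : (f a : ℕ) < m - 1 <;> by_cases hy : (f b : ℕ) < m - 1
    · have k1 := key a hx; have k2 := key b hy
      rw [dif_pos hx, dif_pos hy, ePhi h2m hmn h0t htm hts, ePhi h2m hmn h0t htm hts]
      have hinj : pn σ (f a : ℕ) = pn σ (f b : ℕ) ↔ (f a : ℕ) = (f b : ℕ) := by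
        constructor
        · exact fun hh => pn_inj σ (hfm a) (hfm b) hh
        · intro hh; rw [hh]
      omega
    · have k1 := key a hx; have k2 := hst b hy
      rw [dif_pos hx, dif_neg hy, ePhi h2m hmn h0t htm hts, ePhi h2m hmn h0t htm hts, hβ1]
      rw [k2] at H
      omega
    · have k1 := hst a hx; have k2 := key b hy
      rw [dif_neg hx, dif_pos hy, ePhi h2m hmn h0t htm hts, ePhi h2m hmn h0t htm hts, hβ1]
      rw [k1] at H
      omega
    · have k1 := hst a hx; have k2 := hst b hy
      rw [dif_neg hx, dif_neg hy]
      rw [k1, k2] at H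
      omega

/-- an occurrence of `p` in `Phi` lying entirely in positions `< m - 1` gives one in `σ` -/
lemma A1 {k : ℕ} (p : Fin k → ℕ) (f : Fin k → Fin n) (mono : StrictMono f)
    (hlt : ∀ a b : Fin k,
      (((Phi n m t σ μ h2m hmn h0t htm hts) (f a) : Fin n) : ℕ)
        < (((Phi n m t σ μ h2m hmn h0t htm hts) (f b) : Fin n) : ℕ) ↔ p a < p b)
    (heq : ∀ a b : Fin k,
      (((Phi n m t σ μ h2m hmn h0t htm hts) (f a) : Fin n) : ℕ)
        = (((Phi n m t σ μ h2m hmn h0t htm hts) (f b) : Fin n) : ℕ) ↔ p a = p b)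
    (hpre : ∀ a : Fin k, (f a : ℕ) < m - 1) :
    PatContains (fun i => ((σ i : Fin m) : ℕ)) p := by
  have key : ∀ c : Fin k,
      (Fv n m t σ μ (f c : ℕ) = pn σ (f c : ℕ) + 1 ∧ pn σ (f c : ℕ) < t) ∨
      (Fv n m t σ μ (f c : ℕ) = pn σ (f c : ℕ) + (n - m) ∧ t < pn σ (f c : ℕ)) := by
    intro c
    rcases Fv_cases (μ := μ) h2m hmn h0t htm hts (j := (f c : ℕ)) (by have := (f c).isLt; omega)
      with ⟨_, h2, h3⟩ | ⟨h1, _⟩ | ⟨h1, _⟩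
    · rcases h3 with h3 | h3
      · exact Or.inl h3
      · exact Or.inr h3
    · have := hpre c; omega
    · have := hpre c; omega
  refine ⟨fun a => ⟨(f a : ℕ), by have := hpre a; omega⟩, ?_, ?_, ?_⟩
  · intro x y hxy
    have hm : (f x : ℕ) < (f y : ℕ) := mono hxy
    rw [Fin.lt_def]
    simp only [Fin.val_mk]
    omega
  · intro a b
    have H : Fv n m t σ μ (f a : ℕ) < Fv n m t σ μ (f b : ℕ) ↔ p a < p b := hlt a b
    have k1 := key a; have k2 := key b
    show ((σ (⟨(f a : ℕ), _⟩ : Fin m) : Fin m) : ℕ) < ((σ (⟨(f b : ℕ), _⟩ : Fin m) : Fin m) : ℕ) ↔ _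
    rw [eσ, eσ]
    omega
  · intro a b
    have H : Fv n m t σ μ (f a : ℕ) = Fv n m t σ μ (f b : ℕ) ↔ p a = p b := heq a b
    have k1 := key a; have k2 := key b
    show ((σ (⟨(f a : ℕ), _⟩ : Fin m) : Fin m) : ℕ) = ((σ (⟨(f b : ℕ), _⟩ : Fin m) : Fin m) : ℕ) ↔ _
    rw [eσ, eσ]
    omega

/-- an occurrence of `p` in `Phi` lying entirely in positions `≥ m` gives one in `μ` -/
lemma A2 {k : ℕ} (p : Fin k → ℕ) (f : Fin k → Fin n) (mono : StrictMono f)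
    (hlt : ∀ a b : Fin k,
      (((Phi n m t σ μ h2m hmn h0t htm hts) (f a) : Fin n) : ℕ)
        < (((Phi n m t σ μ h2m hmn h0t htm hts) (f b) : Fin n) : ℕ) ↔ p a < p b)
    (heq : ∀ a b : Fin k,
      (((Phi n m t σ μ h2m hmn h0t htm hts) (f a) : Fin n) : ℕ)
        = (((Phi n m t σ μ h2m hmn h0t htm hts) (f b) : Fin n) : ℕ) ↔ p a = p b)
    (hpost : ∀ a : Fin k, m ≤ (f a : ℕ)) :
    PatContains (fun i => ((μ i : Fin (n - m)) : ℕ)) p := by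
  have key : ∀ c : Fin k, Fv n m t σ μ (f c : ℕ) = pn μ ((f c : ℕ) - m) + t + 1 := by
    intro c
    rcases Fv_cases (μ := μ) h2m hmn h0t htm hts (j := (f c : ℕ)) (by have := (f c).isLt; omega)
      with ⟨h1, _, _⟩ | ⟨h1, _⟩ | ⟨_, h2, _⟩
    · have := hpost c; omega
    · have := hpost c; omega
    · exact h2
  refine ⟨fun a => ⟨(f a : ℕ) - m, by have := (f a).isLt; have := hpost a; omega⟩, ?_, ?_, ?_⟩
  · intro x y hxy
    have hm : (f x : ℕ) < (f y : ℕ) := mono hxy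
    rw [Fin.lt_def]
    have := hpost x
    simp only [Fin.val_mk]
    omega
  · intro a b
    have H : Fv n m t σ μ (f a : ℕ) < Fv n m t σ μ (f b : ℕ) ↔ p a < p b := hlt a b
    rw [key a, key b] at H
    show ((μ (⟨(f a : ℕ) - m, _⟩ : Fin (n - m)) : Fin (n - m)) : ℕ)
      < ((μ (⟨(f b : ℕ) - m, _⟩ : Fin (n - m)) : Fin (n - m)) : ℕ) ↔ _
    rw [eμ, eμ]
    omega
  · intro a b
    have H : Fv n m t σ μ (f a : ℕ) = Fv n m t σ μ (f b : ℕ) ↔ p a = p b := heq a b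
    rw [key a, key b] at H
    show ((μ (⟨(f a : ℕ) - m, _⟩ : Fin (n - m)) : Fin (n - m)) : ℕ)
      = ((μ (⟨(f b : ℕ) - m, _⟩ : Fin (n - m)) : Fin (n - m)) : ℕ) ↔ _
    rw [eμ, eμ]
    omega

/-- an occurrence of `p` in `Phi` with all but the last position `< m - 1` and the last
position `≥ m` gives an occurrence in `σ` using the last position of `σ` -/
lemma A3 {k : ℕ} (p : Fin k → ℕ) (f : Fin k → Fin n) (mono : StrictMono f)
    (hlt : ∀ a b : Fin k,
      (((Phi n m t σ μ h2m hmn h0t htm hts) (f a) : Fin n) : ℕ)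
        < (((Phi n m t σ μ h2m hmn h0t htm hts) (f b) : Fin n) : ℕ) ↔ p a < p b)
    (heq : ∀ a b : Fin k,
      (((Phi n m t σ μ h2m hmn h0t htm hts) (f a) : Fin n) : ℕ)
        = (((Phi n m t σ μ h2m hmn h0t htm hts) (f b) : Fin n) : ℕ) ↔ p a = p b)
    (hpre : ∀ a : Fin k, (a : ℕ) < k - 1 → (f a : ℕ) < m - 1)
    (hlast : ∀ a : Fin k, (a : ℕ) = k - 1 → m ≤ (f a : ℕ)) :
    PatContains (fun i => ((σ i : Fin m) : ℕ)) p := by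
  have key : ∀ c : Fin k, (c : ℕ) < k - 1 →
      (Fv n m t σ μ (f c : ℕ) = pn σ (f c : ℕ) + 1 ∧ pn σ (f c : ℕ) < t) ∨
      (Fv n m t σ μ (f c : ℕ) = pn σ (f c : ℕ) + (n - m) ∧ t < pn σ (f c : ℕ)
        ∧ pn σ (f c : ℕ) < m) := by
    intro c hc
    rcases Fv_cases (μ := μ) h2m hmn h0t htm hts (j := (f c : ℕ)) (by have := (f c).isLt; omega)
      with ⟨_, h2, h3 | h3⟩ | ⟨h1, _⟩ | ⟨h1, _⟩
    · exact Or.inl h3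
    · exact Or.inr ⟨h3.1, h3.2, h2⟩
    · have := hpre c hc; omega
    · have := hpre c hc; omega
  have keyl : ∀ c : Fin k, ¬ ((c : ℕ) < k - 1) →
      (t + 1 ≤ Fv n m t σ μ (f c : ℕ) ∧ Fv n m t σ μ (f c : ℕ) ≤ t + (n - m)) := by
    intro c hc
    have hc' : (c : ℕ) = k - 1 := by have := c.isLt; omega
    rcases Fv_cases (μ := μ) h2m hmn h0t htm hts (j := (f c : ℕ)) (by have := (f c).isLt; omega)
      with ⟨h1, _, _⟩ | ⟨h1, _⟩ | ⟨_, h2, h3⟩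
    · have := hlast c hc'; omega
    · have := hlast c hc'; omega
    · omega
  refine ⟨fun a => if h : (a : ℕ) < k - 1
      then ⟨(f a : ℕ), by have := hpre a h; omega⟩ else ⟨m - 1, by omega⟩, ?_, ?_, ?_⟩
  · intro x y hxy
    have hxy' : (x : ℕ) < (y : ℕ) := hxy
    rw [Fin.lt_def]
    simp only []
    by_cases hx : (x : ℕ) < k - 1 <;> by_cases hy : (y : ℕ) < k - 1
    · rw [dif_pos hx, dif_pos hy]
      have hm : (f x : ℕ) < (f y : ℕ) := mono hxy
      simp only [Fin.val_mk]
      omega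
    · rw [dif_pos hx, dif_neg hy]
      have := hpre x hx
      simp only [Fin.val_mk]
      omega
    · exact absurd y.isLt (by omega)
    · exact absurd y.isLt (by omega)
  · intro a b
    have H : Fv n m t σ μ (f a : ℕ) < Fv n m t σ μ (f b : ℕ) ↔ p a < p b := hlt a b
    simp only []
    by_cases hx : (a : ℕ) < k - 1 <;> by_cases hy : (b : ℕ) < k - 1
    · have k1 := key a hx; have k2 := key b hy
      rw [dif_pos hx, dif_pos hy, eσ, eσ]
      omega
    · have k1 := key a hx; have k2 := keyl b hy
      rw [dif_pos hx, dif_neg hy, eσ, eσ, hts]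
      omega
    · have k1 := keyl a hx; have k2 := key b hy
      rw [dif_neg hx, dif_pos hy, eσ, eσ, hts]
      omega
    · have hab : a = b := by
        apply Fin.ext
        have := a.isLt; have := b.isLt
        omega
      subst hab
      rw [dif_neg hx]
      exact iff_of_false (lt_irrefl _) (lt_irrefl _)
  · intro a b
    have H : Fv n m t σ μ (f a : ℕ) = Fv n m t σ μ (f b : ℕ) ↔ p a = p b := heq a b
    simp only []
    by_cases hx : (a : ℕ) < k - 1 <;> by_cases hy : (b : ℕ) < k - 1
    · have k1 := key a hx; have k2 := key b hy
      rw [dif_pos hx, dif_pos hy, eσ, eσ]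
      omega
    · have k1 := key a hx; have k2 := keyl b hy
      rw [dif_pos hx, dif_neg hy, eσ, eσ, hts]
      omega
    · have k1 := keyl a hx; have k2 := key b hy
      rw [dif_neg hx, dif_pos hy, eσ, eσ, hts]
      omega
    · have hab : a = b := by
        apply Fin.ext
        have := a.isLt; have := b.isLt
        omega
      subst hab
      rw [dif_neg hx]
      exact iff_of_true rfl rfl

end Avoid

end S11
namespace S11
open Finset Equiv

lemma finle {N k : ℕ} (f : Fin k → Fin N) (mono : StrictMono f) (a b : Fin k)
    (h : (a : ℕ) ≤ (b : ℕ)) : (f a : ℕ) ≤ (f b : ℕ) := by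
  rcases Nat.eq_or_lt_of_le h with h1 | h1
  · rw [Fin.ext h1]
  · exact le_of_lt (mono (Fin.lt_def.mpr h1))

section Avoid2

variable {n m t : ℕ} {σ : Equiv.Perm (Fin m)} {μ : Equiv.Perm (Fin (n - m))}
variable (h2m : 2 ≤ m) (hmn : m < n) (h0t : 0 < t) (htm : t < m - 1)
  (hts : pn σ (m - 1) = t)

include h2m hmn h0t htm hts

lemma APat1
    (h : PatContains (fun i => (((Phi n m t σ μ h2m hmn h0t htm hts) i : Fin n) : ℕ)) ![3,1,2,4]) :
    PatContains (fun i => ((σ i : Fin m) : ℕ)) ![3,1,2,4]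
      ∨ PatContains (fun i => ((μ i : Fin (n - m)) : ℕ)) ![3,1,2,4] := by
  obtain ⟨f, mono, hlt, heq⟩ := h
  have v0 : (((0 : Fin 4) : Fin 4) : ℕ) = 0 := rfl
  have v2 : (((2 : Fin 4) : Fin 4) : ℕ) = 2 := rfl
  have v3 : (((3 : Fin 4) : Fin 4) : ℕ) = 3 := rfl
  have q01 : (f 0 : ℕ) < (f 1 : ℕ) := mono (by decide)
  have q12 : (f 1 : ℕ) < (f 2 : ℕ) := mono (by decide)
  have q23 : (f 2 : ℕ) < (f 3 : ℕ) := mono (by decide)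
  have Z0 := Fv_cases (μ := μ) h2m hmn h0t htm hts (j := ((f 0 : Fin n) : ℕ)) (f 0).isLt
  have Z1 := Fv_cases (μ := μ) h2m hmn h0t htm hts (j := ((f 1 : Fin n) : ℕ)) (f 1).isLt
  have Z2 := Fv_cases (μ := μ) h2m hmn h0t htm hts (j := ((f 2 : Fin n) : ℕ)) (f 2).isLt
  have Z3 := Fv_cases (μ := μ) h2m hmn h0t htm hts (j := ((f 3 : Fin n) : ℕ)) (f 3).isLt
  have o12 : Fv n m t σ μ ((f 1 : Fin n) : ℕ) < Fv n m t σ μ ((f 2 : Fin n) : ℕ) :=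
    (hlt 1 2).mpr (by decide)
  have o20 : Fv n m t σ μ ((f 2 : Fin n) : ℕ) < Fv n m t σ μ ((f 0 : Fin n) : ℕ) :=
    (hlt 2 0).mpr (by decide)
  have o03 : Fv n m t σ μ ((f 0 : Fin n) : ℕ) < Fv n m t σ μ ((f 3 : Fin n) : ℕ) :=
    (hlt 0 3).mpr (by decide)
  have tri : ((f 3 : ℕ) < m - 1) ∨ (m ≤ (f 0 : ℕ)) ∨ (((f 2 : ℕ) < m - 1) ∧ m ≤ (f 3 : ℕ)) := by
    omega
  rcases tri with h | h | h
  · left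
    refine A1 h2m hmn h0t htm hts _ f mono hlt heq ?_
    intro a
    have := finle f mono a 3 (by rw [v3]; have := a.isLt; omega)
    omega
  · right
    refine A2 h2m hmn h0t htm hts _ f mono hlt heq ?_
    intro a
    have := finle f mono 0 a (by rw [v0]; omega)
    omega
  · left
    refine A3 h2m hmn h0t htm hts _ f mono hlt heq ?_ ?_
    · intro a ha
      have := finle f mono a 2 (by rw [v2]; omega)
      omega
    · intro a ha
      have hae : a = 3 := Fin.ext (by rw [v3]; omega)
      rw [hae]
      exact h.2

lemma APat2
    (h : PatContains (fun i => (((Phi n m t σ μ h2m hmn h0t htm hts) i : Fin n) : ℕ))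
      ![4,2,1,5,3]) :
    PatContains (fun i => ((σ i : Fin m) : ℕ)) ![4,2,1,5,3]
      ∨ PatContains (fun i => ((μ i : Fin (n - m)) : ℕ)) ![4,2,1,5,3] := by
  obtain ⟨f, mono, hlt, heq⟩ := h
  have v0 : (((0 : Fin 5) : Fin 5) : ℕ) = 0 := rfl
  have v3 : (((3 : Fin 5) : Fin 5) : ℕ) = 3 := rfl
  have v4 : (((4 : Fin 5) : Fin 5) : ℕ) = 4 := rfl
  have q01 : (f 0 : ℕ) < (f 1 : ℕ) := mono (by decide)
  have q12 : (f 1 : ℕ) < (f 2 : ℕ) := mono (by decide)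
  have q23 : (f 2 : ℕ) < (f 3 : ℕ) := mono (by decide)
  have q34 : (f 3 : ℕ) < (f 4 : ℕ) := mono (by decide)
  have Z0 := Fv_cases (μ := μ) h2m hmn h0t htm hts (j := ((f 0 : Fin n) : ℕ)) (f 0).isLt
  have Z1 := Fv_cases (μ := μ) h2m hmn h0t htm hts (j := ((f 1 : Fin n) : ℕ)) (f 1).isLt
  have Z2 := Fv_cases (μ := μ) h2m hmn h0t htm hts (j := ((f 2 : Fin n) : ℕ)) (f 2).isLt
  have Z3 := Fv_cases (μ := μ) h2m hmn h0t htm hts (j := ((f 3 : Fin n) : ℕ)) (f 3).isLt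
  have Z4 := Fv_cases (μ := μ) h2m hmn h0t htm hts (j := ((f 4 : Fin n) : ℕ)) (f 4).isLt
  have o21 : Fv n m t σ μ ((f 2 : Fin n) : ℕ) < Fv n m t σ μ ((f 1 : Fin n) : ℕ) :=
    (hlt 2 1).mpr (by decide)
  have o14 : Fv n m t σ μ ((f 1 : Fin n) : ℕ) < Fv n m t σ μ ((f 4 : Fin n) : ℕ) :=
    (hlt 1 4).mpr (by decide)
  have o40 : Fv n m t σ μ ((f 4 : Fin n) : ℕ) < Fv n m t σ μ ((f 0 : Fin n) : ℕ) :=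
    (hlt 4 0).mpr (by decide)
  have o03 : Fv n m t σ μ ((f 0 : Fin n) : ℕ) < Fv n m t σ μ ((f 3 : Fin n) : ℕ) :=
    (hlt 0 3).mpr (by decide)
  have tri : ((f 4 : ℕ) < m - 1) ∨ (m ≤ (f 0 : ℕ)) ∨ (((f 3 : ℕ) < m - 1) ∧ m ≤ (f 4 : ℕ)) := by
    omega
  rcases tri with h | h | h
  · left
    refine A1 h2m hmn h0t htm hts _ f mono hlt heq ?_
    intro a
    have := finle f mono a 4 (by rw [v4]; have := a.isLt; omega)
    omega
  · right
    refine A2 h2m hmn h0t htm hts _ f mono hlt heq ?_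
    intro a
    have := finle f mono 0 a (by rw [v0]; omega)
    omega
  · left
    refine A3 h2m hmn h0t htm hts _ f mono hlt heq ?_ ?_
    · intro a ha
      have := finle f mono a 3 (by rw [v3]; omega)
      omega
    · intro a ha
      have hae : a = 4 := Fin.ext (by rw [v4]; omega)
      rw [hae]
      exact h.2

lemma APat3
    (h : PatContains (fun i => (((Phi n m t σ μ h2m hmn h0t htm hts) i : Fin n) : ℕ))
      ![2,4,1,5,3]) :
    PatContains (fun i => ((σ i : Fin m) : ℕ)) ![2,4,1,5,3]
      ∨ PatContains (fun i => ((μ i : Fin (n - m)) : ℕ)) ![2,4,1,5,3] := by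
  obtain ⟨f, mono, hlt, heq⟩ := h
  have v0 : (((0 : Fin 5) : Fin 5) : ℕ) = 0 := rfl
  have v3 : (((3 : Fin 5) : Fin 5) : ℕ) = 3 := rfl
  have v4 : (((4 : Fin 5) : Fin 5) : ℕ) = 4 := rfl
  have q01 : (f 0 : ℕ) < (f 1 : ℕ) := mono (by decide)
  have q12 : (f 1 : ℕ) < (f 2 : ℕ) := mono (by decide)
  have q23 : (f 2 : ℕ) < (f 3 : ℕ) := mono (by decide)
  have q34 : (f 3 : ℕ) < (f 4 : ℕ) := mono (by decide)
  have Z0 := Fv_cases (μ := μ) h2m hmn h0t htm hts (j := ((f 0 : Fin n) : ℕ)) (f 0).isLt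
  have Z1 := Fv_cases (μ := μ) h2m hmn h0t htm hts (j := ((f 1 : Fin n) : ℕ)) (f 1).isLt
  have Z2 := Fv_cases (μ := μ) h2m hmn h0t htm hts (j := ((f 2 : Fin n) : ℕ)) (f 2).isLt
  have Z3 := Fv_cases (μ := μ) h2m hmn h0t htm hts (j := ((f 3 : Fin n) : ℕ)) (f 3).isLt
  have Z4 := Fv_cases (μ := μ) h2m hmn h0t htm hts (j := ((f 4 : Fin n) : ℕ)) (f 4).isLt
  have o20 : Fv n m t σ μ ((f 2 : Fin n) : ℕ) < Fv n m t σ μ ((f 0 : Fin n) : ℕ) :=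
    (hlt 2 0).mpr (by decide)
  have o04 : Fv n m t σ μ ((f 0 : Fin n) : ℕ) < Fv n m t σ μ ((f 4 : Fin n) : ℕ) :=
    (hlt 0 4).mpr (by decide)
  have o41 : Fv n m t σ μ ((f 4 : Fin n) : ℕ) < Fv n m t σ μ ((f 1 : Fin n) : ℕ) :=
    (hlt 4 1).mpr (by decide)
  have o13 : Fv n m t σ μ ((f 1 : Fin n) : ℕ) < Fv n m t σ μ ((f 3 : Fin n) : ℕ) :=
    (hlt 1 3).mpr (by decide)
  have tri : ((f 4 : ℕ) < m - 1) ∨ (m ≤ (f 0 : ℕ)) ∨ (((f 3 : ℕ) < m - 1) ∧ m ≤ (f 4 : ℕ)) := by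
    omega
  rcases tri with h | h | h
  · left
    refine A1 h2m hmn h0t htm hts _ f mono hlt heq ?_
    intro a
    have := finle f mono a 4 (by rw [v4]; have := a.isLt; omega)
    omega
  · right
    refine A2 h2m hmn h0t htm hts _ f mono hlt heq ?_
    intro a
    have := finle f mono 0 a (by rw [v0]; omega)
    omega
  · left
    refine A3 h2m hmn h0t htm hts _ f mono hlt heq ?_ ?_
    · intro a ha
      have := finle f mono a 3 (by rw [v3]; omega)
      omega
    · intro a ha
      have hae : a = 4 := Fin.ext (by rw [v4]; omega)
      rw [hae]
      exact h.2

lemma avoids_Phi_iff :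
    AvoidsI (Phi n m t σ μ h2m hmn h0t htm hts) ↔ AvoidsI σ ∧ AvoidsI μ := by
  constructor
  · intro hΦ
    obtain ⟨h1, h2, h3⟩ := hΦ
    exact ⟨⟨fun hc => h1 (B2 h2m hmn h0t htm hts _ hc),
            fun hc => h2 (B2 h2m hmn h0t htm hts _ hc),
            fun hc => h3 (B2 h2m hmn h0t htm hts _ hc)⟩,
           ⟨fun hc => h1 (B1 h2m hmn h0t htm hts _ hc),
            fun hc => h2 (B1 h2m hmn h0t htm hts _ hc),
            fun hc => h3 (B1 h2m hmn h0t htm hts _ hc)⟩⟩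
  · rintro ⟨⟨hσ1, hσ2, hσ3⟩, ⟨hμ1, hμ2, hμ3⟩⟩
    refine ⟨?_, ?_, ?_⟩
    · intro hc
      rcases APat1 h2m hmn h0t htm hts hc with h | h
      · exact hσ1 h
      · exact hμ1 h
    · intro hc
      rcases APat2 h2m hmn h0t htm hts hc with h | h
      · exact hσ2 h
      · exact hμ2 h
    · intro hc
      rcases APat3 h2m hmn h0t htm hts hc with h | h
      · exact hσ3 h
      · exact hμ3 h

end Avoid2

end S11
namespace S11
open Finset Equiv

section ShapePhi

variable {n m t : ℕ} {σ : Equiv.Perm (Fin m)} {μ : Equiv.Perm (Fin (n - m))}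
variable (h2m : 2 ≤ m) (hmn : m < n) (h0t : 0 < t) (htm : t < m - 1)
  (hts : pn σ (m - 1) = t)

include h2m hmn h0t htm hts

lemma pn_Phi_symm {j : ℕ} (hj : j < n) :
    pn (Phi n m t σ μ h2m hmn h0t htm hts).symm j = Gv n m t σ μ j := by
  unfold pn
  rw [dif_pos hj]
  exact Phi_symm_apply h2m hmn h0t htm hts ⟨j, hj⟩

lemma shape_Phi : ShapeP (Phi n m t σ μ h2m hmn h0t htm hts) t (n - m) := by
  refine ⟨by omega, by omega, by omega, ?_⟩
  intro i
  rw [permLetterL_iff]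
  unfold LL
  rw [pn_Phi_symm h2m hmn h0t htm hts (by have := i.isLt; omega),
    pn_Phi_symm h2m hmn h0t htm hts (by omega),
    Gv_zero h2m hmn h0t htm hts]
  have hi := i.isLt
  by_cases h1 : (i : ℕ) + 1 ≤ t
  · rw [Gv_low h2m hmn h0t htm hts (by omega) h1]
    have hlt := pn_lt σ.symm (m := m) (j := (i : ℕ) + 1 - 1) (by omega)
    have hne := symm_pn_ne h2m hmn h0t htm hts (v := (i : ℕ) + 1 - 1) (by omega) (by omega)
    constructor
    · intro _; omega
    · intro _; omega
  · by_cases h2 : (i : ℕ) + 1 ≤ t + (n - m)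
    · rw [Gv_mid h2m hmn h0t htm hts (by omega) h2]
      constructor
      · intro hh; omega
      · intro hh; omega
    · rw [Gv_high h2m hmn h0t htm hts (by omega)]
      have hlt := pn_lt σ.symm (m := m) (j := (i : ℕ) + 1 - (n - m)) (by omega)
      have hne := symm_pn_ne h2m hmn h0t htm hts (v := (i : ℕ) + 1 - (n - m)) (by omega)
        (by omega)
      constructor
      · intro _; omega
      · intro _; omega

lemma mval_Phi :
    (((Phi n m t σ μ h2m hmn h0t htm hts).symm ⟨0, by omega⟩ : Fin n) : ℕ) = m - 1 := by
  rw [Phi_symm_apply]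
  exact Gv_zero h2m hmn h0t htm hts

end ShapePhi

lemma card_filter_fin (n : ℕ) (P : ℕ → Prop) [DecidablePred P] :
    (Finset.univ.filter (fun v : Fin n => P (v : ℕ))).card
      = ((Finset.range n).filter P).card := by
  refine Finset.card_bij' (fun v _ => (v : ℕ))
    (fun r hr => (⟨r, by simp only [Finset.mem_filter, Finset.mem_range] at hr; omega⟩ : Fin n))
    ?_ ?_ ?_ ?_
  · intro v hv
    simp only [Finset.mem_filter, Finset.mem_univ, true_and] at hv
    simp only [Finset.mem_filter, Finset.mem_range]
    exact ⟨v.isLt, hv⟩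
  · intro r hr
    simp only [Finset.mem_filter, Finset.mem_range] at hr
    simp only [Finset.mem_filter, Finset.mem_univ, true_and]
    exact hr.2
  · intro v hv
    exact Fin.ext rfl
  · intro r hr
    rfl

lemma pos_zero {n : ℕ} (hn2 : 2 ≤ n) (π : Equiv.Perm (Fin n)) {a b : ℕ}
    (hs : ShapeP π a b) : ((π.symm ⟨0, by omega⟩ : Fin n) : ℕ) = n - 1 - b := by
  classical
  obtain ⟨ha1, hb1, hab, hL⟩ := hs
  have hn4 : 4 ≤ n := by omega
  have h1 : (Finset.univ.filter (fun v : Fin n => π.symm v < π.symm ⟨0, by omega⟩)).card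
      = ((π.symm ⟨0, by omega⟩ : Fin n) : ℕ) := by
    rw [show ((π.symm ⟨0, by omega⟩ : Fin n) : ℕ)
      = (Finset.range ((π.symm ⟨0, by omega⟩ : Fin n) : ℕ)).card from (Finset.card_range _).symm]
    refine Finset.card_nbij' (fun v => ((π.symm v : Fin n) : ℕ))
      (fun r => π (⟨r % n, Nat.mod_lt _ (by omega)⟩ : Fin n)) ?_ ?_ ?_ ?_
    · intro v hv
      simp only [Finset.mem_coe, Finset.mem_filter, Finset.mem_univ, true_and] at hv
      simp only [Finset.mem_coe, Finset.mem_range]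
      exact hv
    · intro r hr
      simp only [Finset.mem_coe, Finset.mem_range] at hr
      have hrn : r % n = r := Nat.mod_eq_of_lt (by
        have := (π.symm (⟨0, by omega⟩ : Fin n)).isLt; omega)
      simp only [Finset.mem_coe, Finset.mem_filter, Finset.mem_univ, true_and]
      rw [Equiv.symm_apply_apply, Fin.lt_def]
      simpa [hrn] using hr
    · intro v hv
      simp only []
      have hvn : ((π.symm v : Fin n) : ℕ) % n = ((π.symm v : Fin n) : ℕ) :=
        Nat.mod_eq_of_lt (π.symm v).isLt
      have he : (⟨((π.symm v : Fin n) : ℕ) % n, Nat.mod_lt _ (by omega)⟩ : Fin n) = π.symm v :=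
        Fin.ext (by rw [Fin.val_mk, hvn])
      rw [he, Equiv.apply_symm_apply]
    · intro r hr
      simp only [Finset.mem_coe, Finset.mem_range] at hr
      have hrn : r % n = r := Nat.mod_eq_of_lt (by
        have := (π.symm (⟨0, by omega⟩ : Fin n)).isLt; omega)
      simp only []
      rw [Equiv.symm_apply_apply]
      simp [hrn]
  have h2 : (Finset.univ.filter (fun v : Fin n => π.symm v < π.symm ⟨0, by omega⟩))
      = (Finset.univ.filter (fun v : Fin n =>
          (1 ≤ (v : ℕ) ∧ (v : ℕ) ≤ a) ∨ a + b + 1 ≤ (v : ℕ))) := by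
    ext v
    simp only [Finset.mem_filter, Finset.mem_univ, true_and]
    by_cases hv0 : (v : ℕ) = 0
    · have hv : v = ⟨0, by omega⟩ := Fin.ext hv0
      rw [hv]
      constructor
      · intro h; exact absurd h (lt_irrefl _)
      · intro h; simp only [Fin.val_mk] at h; omega
    · have hvlt := v.isLt
      have hLv := hL ⟨(v : ℕ) - 1, by omega⟩
      unfold permLetterL at hLv
      have he1 : (⟨((⟨(v : ℕ) - 1, by omega⟩ : Fin (n - 1)) : ℕ) + 1, by omega⟩ : Fin n) = v :=
        Fin.ext (by simp only [Fin.val_mk]; omega)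
      rw [he1] at hLv
      have he2 : ∀ (h1 : (0:ℕ) < n) (h2 : (0:ℕ) < n),
          (π.symm (⟨0, h1⟩ : Fin n)) = π.symm ⟨0, h2⟩ := fun _ _ => rfl
      rw [he2 _ (by omega)] at hLv
      rw [hLv]
      simp only [Fin.val_mk]
      omega
  have h3 : (Finset.univ.filter (fun v : Fin n =>
      (1 ≤ (v : ℕ) ∧ (v : ℕ) ≤ a) ∨ a + b + 1 ≤ (v : ℕ))).card = a + (n - (a + b + 1)) := by
    rw [card_filter_fin n (fun v => (1 ≤ v ∧ v ≤ a) ∨ a + b + 1 ≤ v)]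
    have he : (Finset.range n).filter (fun v => (1 ≤ v ∧ v ≤ a) ∨ a + b + 1 ≤ v)
        = Finset.Ico 1 (a + 1) ∪ Finset.Ico (a + b + 1) n := by
      ext x
      simp only [Finset.mem_filter, Finset.mem_range, Finset.mem_union, Finset.mem_Ico]
      omega
    rw [he, Finset.card_union_of_disjoint, Nat.card_Ico, Nat.card_Ico]
    · omega
    · rw [Finset.disjoint_left]
      intro x hx hx'
      simp only [Finset.mem_Ico] at hx hx'
      omega
  rw [h2, h3] at h1
  omega

end S11
namespace S11
open Finset Equiv

lemma zones {n : ℕ} (hn2 : 2 ≤ n) (π : Equiv.Perm (Fin n)) {a b : ℕ}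
    (hs : ShapeP π a b) {j : ℕ} (hj : j < n) :
    (j < n - 1 - b → (1 ≤ pn π j ∧ pn π j ≤ a) ∨ (a + b + 1 ≤ pn π j ∧ pn π j ≤ n - 1))
    ∧ (j = n - 1 - b → pn π j = 0)
    ∧ (n - 1 - b < j → a + 1 ≤ pn π j ∧ pn π j ≤ a + b) := by
  classical
  have hz := pos_zero hn2 π hs
  obtain ⟨ha1, hb1, hab, hL⟩ := hs
  have hv : pn π j = ((π ⟨j, hj⟩ : Fin n) : ℕ) := by unfold pn; rw [dif_pos hj]
  have hvlt : pn π j < n := by rw [hv]; exact (π ⟨j, hj⟩).isLt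
  by_cases hv0 : pn π j = 0
  · have hπj : π ⟨j, hj⟩ = ⟨0, by omega⟩ := Fin.ext (by rw [← hv]; exact hv0)
    have hjz : (⟨j, hj⟩ : Fin n) = π.symm ⟨0, by omega⟩ := by
      rw [← hπj, Equiv.symm_apply_apply]
    have hjval : j = n - 1 - b := by
      have := congrArg (fun x : Fin n => (x : ℕ)) hjz
      simp only [Fin.val_mk] at this
      omega
    refine ⟨fun hh => by omega, fun _ => hv0, fun hh => by omega⟩
  · have hLv := hL ⟨pn π j - 1, by omega⟩
    unfold permLetterL at hLv
    have he1 : (⟨((⟨pn π j - 1, by omega⟩ : Fin (n - 1)) : ℕ) + 1, by omega⟩ : Fin n)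
        = π ⟨j, hj⟩ := Fin.ext (by simp only [Fin.val_mk]; omega)
    rw [he1, Equiv.symm_apply_apply] at hLv
    have he2 : ((π.symm ⟨0, by omega⟩ : Fin n) : ℕ) = n - 1 - b := hz
    rw [Fin.lt_def] at hLv
    simp only [Fin.val_mk] at hLv
    rw [he2] at hLv
    constructor
    · intro hh
      have := hLv.mp hh
      omega
    constructor
    · intro hh
      exfalso
      have hzz : π.symm ⟨0, by omega⟩ = ⟨j, hj⟩ := Fin.ext (by rw [hz, Fin.val_mk]; omega)
      have hzz2 := congrArg π hzz
      rw [Equiv.apply_symm_apply] at hzz2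
      apply hv0
      rw [hv, ← hzz2]
    · intro hh
      by_cases hcc : (pn π j - 1 < a ∨ a + b ≤ pn π j - 1)
      · have := hLv.mpr hcc; omega
      · omega

lemma surj {n m : ℕ} (hn2 : 2 ≤ n) (π : Equiv.Perm (Fin n)) {a b : ℕ}
    (hs : ShapeP π a b) (hm : m = n - b) :
    ∃ (σ : Equiv.Perm (Fin m)) (μ : Equiv.Perm (Fin (n - m)))
      (h2m : 2 ≤ m) (hmn : m < n) (h0t : 0 < a) (htm : a < m - 1)
      (hts : pn σ (m - 1) = a),
      Phi n m a σ μ h2m hmn h0t htm hts = π := by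
  classical
  obtain ⟨ha1, hb1, hab, hL⟩ := hs
  have hs' : ShapeP π a b := ⟨ha1, hb1, hab, hL⟩
  have h2m : 2 ≤ m := by omega
  have hmn : m < n := by omega
  have h0t : 0 < a := ha1
  have htm : a < m - 1 := by omega
  have hnm : n - m = b := by omega
  have hm1 : m - 1 = n - 1 - b := by omega
  have Z : ∀ j : ℕ, j < n →
      (j < n - 1 - b → (1 ≤ pn π j ∧ pn π j ≤ a) ∨ (a + b + 1 ≤ pn π j ∧ pn π j ≤ n - 1))
      ∧ (j = n - 1 - b → pn π j = 0)
      ∧ (n - 1 - b < j → a + 1 ≤ pn π j ∧ pn π j ≤ a + b) :=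
    fun j hj => zones hn2 π hs' hj
  -- build σ
  set sf : Fin m → Fin m := fun j =>
    ⟨(if (j : ℕ) = m - 1 then a else if pn π (j : ℕ) ≤ a then pn π (j : ℕ) - 1
        else pn π (j : ℕ) - b) % m, Nat.mod_lt _ (by omega)⟩ with hsfdef
  have sfval : ∀ j : Fin m, (sf j : ℕ) =
      if (j : ℕ) = m - 1 then a else if pn π (j : ℕ) ≤ a then pn π (j : ℕ) - 1
        else pn π (j : ℕ) - b := by
    intro j
    have hjm := j.isLt
    simp only [hsfdef, Fin.val_mk]
    apply Nat.mod_eq_of_lt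
    by_cases h1 : (j : ℕ) = m - 1
    · rw [if_pos h1]; omega
    · rw [if_neg h1]
      have hZ := (Z (j : ℕ) (by omega)).1 (by omega)
      by_cases h2 : pn π (j : ℕ) ≤ a
      · rw [if_pos h2]; omega
      · rw [if_neg h2]; omega
  have hσinj : Function.Injective sf := by
    intro j1 j2 hh
    have hv : (sf j1 : ℕ) = (sf j2 : ℕ) := by rw [hh]
    rw [sfval j1, sfval j2] at hv
    have h1m := j1.isLt
    have h2m' := j2.isLt
    apply Fin.ext
    by_cases e1 : (j1 : ℕ) = m - 1 <;> by_cases e2 : (j2 : ℕ) = m - 1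
    · omega
    · rw [if_pos e1, if_neg e2] at hv
      have hZ := (Z (j2 : ℕ) (by omega)).1 (by omega)
      split_ifs at hv <;> omega
    · rw [if_neg e1, if_pos e2] at hv
      have hZ := (Z (j1 : ℕ) (by omega)).1 (by omega)
      split_ifs at hv <;> omega
    · rw [if_neg e1, if_neg e2] at hv
      have hZ1 := (Z (j1 : ℕ) (by omega)).1 (by omega)
      have hZ2 := (Z (j2 : ℕ) (by omega)).1 (by omega)
      have hinj : pn π (j1 : ℕ) = pn π (j2 : ℕ) → (j1 : ℕ) = (j2 : ℕ) :=
        pn_inj π (by omega) (by omega)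
      split_ifs at hv <;> omega
  set σ : Equiv.Perm (Fin m) :=
    Equiv.ofBijective sf (Finite.injective_iff_bijective.mp hσinj) with hσdef
  have hσval : ∀ j : Fin m, ((σ j : Fin m) : ℕ) = (sf j : ℕ) := fun j => rfl
  -- build μ
  set mf : Fin (n - m) → Fin (n - m) := fun j =>
    ⟨(pn π (m + (j : ℕ)) - (a + 1)) % (n - m), Nat.mod_lt _ (by omega)⟩ with hmfdef
  have mfval : ∀ j : Fin (n - m), (mf j : ℕ) = pn π (m + (j : ℕ)) - (a + 1) := by
    intro j
    have hjb := j.isLt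
    have hZ := (Z (m + (j : ℕ)) (by omega)).2.2 (by omega)
    simp only [hmfdef, Fin.val_mk]
    apply Nat.mod_eq_of_lt
    omega
  have hμinj : Function.Injective mf := by
    intro j1 j2 hh
    have hv : (mf j1 : ℕ) = (mf j2 : ℕ) := by rw [hh]
    rw [mfval j1, mfval j2] at hv
    have h1b := j1.isLt
    have h2b := j2.isLt
    have hZ1 := (Z (m + (j1 : ℕ)) (by omega)).2.2 (by omega)
    have hZ2 := (Z (m + (j2 : ℕ)) (by omega)).2.2 (by omega)
    have hinj : pn π (m + (j1 : ℕ)) = pn π (m + (j2 : ℕ)) → m + (j1 : ℕ) = m + (j2 : ℕ) :=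
      pn_inj π (by omega) (by omega)
    apply Fin.ext
    omega
  set μ : Equiv.Perm (Fin (n - m)) :=
    Equiv.ofBijective mf (Finite.injective_iff_bijective.mp hμinj) with hμdef
  have hμval : ∀ j : Fin (n - m), ((μ j : Fin (n - m)) : ℕ) = (mf j : ℕ) := fun j => rfl
  -- last value of σ
  have hts : pn σ (m - 1) = a := by
    unfold pn
    rw [dif_pos (show m - 1 < m by omega)]
    rw [hσval ⟨m - 1, by omega⟩, sfval ⟨m - 1, by omega⟩]
    simp
  refine ⟨σ, μ, h2m, hmn, h0t, htm, hts, ?_⟩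
  apply Equiv.ext
  intro j
  apply Fin.ext
  rw [Phi_apply]
  have hπv : ((π j : Fin n) : ℕ) = pn π (j : ℕ) := pn_eq π j
  rw [hπv]
  have hjn := j.isLt
  unfold Fv
  by_cases h1 : (j : ℕ) < m - 1
  · rw [if_pos h1]
    have hZ := (Z (j : ℕ) (by omega)).1 (by omega)
    have hσj : pn σ (j : ℕ) = (sf ⟨(j : ℕ), by omega⟩ : ℕ) := by
      unfold pn
      rw [dif_pos (show (j : ℕ) < m by omega)]
      exact hσval ⟨(j : ℕ), by omega⟩
    have hσj2 : pn σ (j : ℕ)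
        = if pn π (j : ℕ) ≤ a then pn π (j : ℕ) - 1 else pn π (j : ℕ) - b := by
      rw [hσj, sfval ⟨(j : ℕ), by omega⟩, Fin.val_mk,
        if_neg (show ¬ (j : ℕ) = m - 1 from by omega)]
    rw [hσj2]
    by_cases h2 : pn π (j : ℕ) ≤ a
    · rw [if_pos h2, if_pos (show pn π (j : ℕ) - 1 < a from by omega)]
      omega
    · rw [if_neg h2, if_neg (show ¬ (pn π (j : ℕ) - b < a) from by omega)]
      omega
  · by_cases h2 : (j : ℕ) = m - 1
    · rw [if_neg h1, if_pos h2]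
      have hZ := (Z (j : ℕ) (by omega)).2.1 (by omega)
      omega
    · rw [if_neg h1, if_neg h2]
      have hμj : pn μ ((j : ℕ) - m) = (mf ⟨(j : ℕ) - m, by omega⟩ : ℕ) := by
        unfold pn
        rw [dif_pos (show (j : ℕ) - m < n - m by omega)]
        exact hμval ⟨(j : ℕ) - m, by omega⟩
      have hZ := (Z (j : ℕ) (by omega)).2.2 (by omega)
      have hμj2 : pn μ ((j : ℕ) - m) = pn π (j : ℕ) - (a + 1) := by
        rw [hμj, mfval ⟨(j : ℕ) - m, by omega⟩, Fin.val_mk,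
          show m + ((j : ℕ) - m) = (j : ℕ) from by omega]
      rw [hμj2]
      omega

end S11
namespace S11
open Finset Equiv

lemma nat_card_subtype {α : Type*} [Fintype α] (P : α → Prop) [DecidablePred P] :
    Nat.card {x : α // P x} = (Finset.univ.filter P).card := by
  rw [Nat.card_eq_fintype_card, Fintype.card_subtype]

lemma lastP_iff {m : ℕ} (h2m : 2 ≤ m) (σ : Equiv.Perm (Fin m)) :
    (∃ aa : Fin m, (aa : ℕ) = m - 1 ∧ 0 < ((σ aa : Fin m) : ℕ) ∧ ((σ aa : Fin m) : ℕ) < m - 1)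
    ↔ (0 < pn σ (m - 1) ∧ pn σ (m - 1) < m - 1) := by
  have hpn : pn σ (m - 1) = ((σ ⟨m - 1, by omega⟩ : Fin m) : ℕ) := by
    unfold pn; rw [dif_pos (by omega : m - 1 < m)]
  constructor
  · rintro ⟨aa, h1, h2, h3⟩
    have haa : aa = ⟨m - 1, by omega⟩ := Fin.ext (by simp only [Fin.val_mk]; exact h1)
    rw [haa] at h2 h3
    rw [hpn]
    exact ⟨h2, h3⟩
  · rintro ⟨h1, h2⟩
    refine ⟨⟨m - 1, by omega⟩, Fin.val_mk _, ?_, ?_⟩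
    · rw [← hpn]; exact h1
    · rw [← hpn]; exact h2

lemma Phi_inj {n m t1 t2 : ℕ} {σ1 σ2 : Equiv.Perm (Fin m)} {μ1 μ2 : Equiv.Perm (Fin (n - m))}
    (h2m : 2 ≤ m) (hmn : m < n)
    (h0t1 : 0 < t1) (htm1 : t1 < m - 1) (hts1 : pn σ1 (m - 1) = t1)
    (h0t2 : 0 < t2) (htm2 : t2 < m - 1) (hts2 : pn σ2 (m - 1) = t2)
    (heq : Phi n m t1 σ1 μ1 h2m hmn h0t1 htm1 hts1 = Phi n m t2 σ2 μ2 h2m hmn h0t2 htm2 hts2) :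
    σ1 = σ2 ∧ μ1 = μ2 := by
  have hFv : ∀ j, j < n → Fv n m t1 σ1 μ1 j = Fv n m t2 σ2 μ2 j := by
    intro j hj
    have h := congrArg (fun (e : Equiv.Perm (Fin n)) => ((e ⟨j, hj⟩ : Fin n) : ℕ)) heq
    simpa only [Phi_apply] using h
  have hGv : ∀ v, v < n → Gv n m t1 σ1 μ1 v = Gv n m t2 σ2 μ2 v := by
    intro v hv
    have h := congrArg (fun (e : Equiv.Perm (Fin n)) => ((e.symm ⟨v, hv⟩ : Fin n) : ℕ)) heq
    simpa only [Phi_symm_apply] using h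
  have htt : t1 = t2 := by
    rcases lt_trichotomy t1 t2 with h | h | h
    · exfalso
      have hg := hGv (t1 + 1) (by omega)
      rw [Gv_mid h2m hmn h0t1 htm1 hts1 (by omega) (by omega),
        Gv_low h2m hmn h0t2 htm2 hts2 (by omega) (by omega)] at hg
      have := pn_lt σ2.symm (m := m) (j := t1 + 1 - 1) (by omega)
      omega
    · exact h
    · exfalso
      have hg := hGv (t2 + 1) (by omega)
      rw [Gv_low h2m hmn h0t1 htm1 hts1 (by omega) (by omega),
        Gv_mid h2m hmn h0t2 htm2 hts2 (by omega) (by omega)] at hg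
      have := pn_lt σ1.symm (m := m) (j := t2 + 1 - 1) (by omega)
      omega
  subst htt
  constructor
  · apply Equiv.ext
    intro x
    apply Fin.ext
    rw [pn_eq σ1 x, pn_eq σ2 x]
    by_cases hx : (x : ℕ) < m - 1
    · have hF := hFv (x : ℕ) (by have := x.isLt; omega)
      unfold Fv at hF
      rw [if_pos hx, if_pos hx] at hF
      have l1 := pn_lt σ1 (m := m) (j := (x : ℕ)) (by omega)
      have l2 := pn_lt σ2 (m := m) (j := (x : ℕ)) (by omega)
      have n1 := pn_ne_t h2m hmn h0t1 htm1 hts1 hx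
      have n2 := pn_ne_t h2m hmn h0t2 htm2 hts2 hx
      split_ifs at hF <;> omega
    · have hx' : (x : ℕ) = m - 1 := by have := x.isLt; omega
      rw [hx', hts1, hts2]
  · apply Equiv.ext
    intro x
    apply Fin.ext
    rw [pn_eq μ1 x, pn_eq μ2 x]
    have hF := hFv (m + (x : ℕ)) (by have := x.isLt; omega)
    unfold Fv at hF
    rw [if_neg (by omega), if_neg (by omega), if_neg (by omega), if_neg (by omega),
      show m + (x : ℕ) - m = (x : ℕ) from by omega] at hF
    omega

end S11
namespace S11
open Finset Equiv

open Classical in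
/-- pairs `(σ, μ)` giving rise to class permutations with parameter `m` -/
noncomputable def DD (n k m : ℕ) :
    Finset (Equiv.Perm (Fin m) × Equiv.Perm (Fin (n - m))) :=
  Finset.univ.filter (fun q => (0 < pn q.1 (m - 1) ∧ pn q.1 (m - 1) < m - 1)
    ∧ AvoidsI q.1 ∧ AvoidsI q.2 ∧ ides q.1 + ides q.2 = k - 1)

lemma mem_DD {n k m : ℕ} {q : Equiv.Perm (Fin m) × Equiv.Perm (Fin (n - m))} :
    q ∈ DD n k m ↔ (0 < pn q.1 (m - 1) ∧ pn q.1 (m - 1) < m - 1)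
      ∧ AvoidsI q.1 ∧ AvoidsI q.2 ∧ ides q.1 + ides q.2 = k - 1 := by
  unfold DD
  simp only [Finset.mem_filter, Finset.mem_univ, true_and]

lemma inner_eq (n k m : ℕ) (hk : 1 ≤ k) (h2m : 2 ≤ m) :
    (∑ i ∈ Finset.range k,
      Nat.card {σ : Equiv.Perm (Fin m) // AvoidsI σ ∧
          (∃ a : Fin m, (a : ℕ) = m - 1 ∧
            0 < ((σ a : Fin m) : ℕ) ∧ ((σ a : Fin m) : ℕ) < m - 1) ∧
          ides σ = i} *
      Nat.card {μ : Equiv.Perm (Fin (n - m)) // AvoidsI μ ∧ ides μ = k - 1 - i})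
    = (DD n k m).card := by
  classical
  rw [Finset.card_eq_sum_card_fiberwise
    (f := fun q : Equiv.Perm (Fin m) × Equiv.Perm (Fin (n - m)) => ides q.1)
    (t := Finset.range k)
    (fun q hq => by
      rw [Finset.mem_coe, mem_DD] at hq
      rw [Finset.mem_coe, Finset.mem_range]
      show ides q.1 < k
      omega)]
  apply Finset.sum_congr rfl
  intro i hi
  rw [Finset.mem_range] at hi
  rw [nat_card_subtype, nat_card_subtype, ← Finset.card_product]
  apply congrArg Finset.card
  ext q
  simp only [Finset.mem_product, Finset.mem_filter, Finset.mem_univ, true_and, mem_DD]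
  rw [lastP_iff h2m q.1]
  constructor
  · rintro ⟨⟨ha1, hl, hid⟩, ha2, hid2⟩
    exact ⟨⟨hl, ha1, ha2, by omega⟩, hid⟩
  · rintro ⟨⟨hl, ha1, ha2, hsum⟩, hid⟩
    exact ⟨⟨ha1, hl, hid⟩, ha2, by omega⟩

lemma fiber_eq (n k m : ℕ) (hn : 2 ≤ n) (hk : 1 ≤ k) (h2m : 2 ≤ m) (hmn : m < n)
    (z : Fin n) (hz0 : (z : ℕ) = 0)
    (S : Finset (Equiv.Perm (Fin n)))
    (hS : ∀ π, π ∈ S ↔ ((AvoidsI π ∧ altEq π 3 ∧ FirstL π ∧ ides π = k)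
      ∧ ((π.symm z : Fin n) : ℕ) + 1 = m)) :
    S.card = (DD n k m).card := by
  classical
  have hzz : z = ⟨0, by omega⟩ := Fin.ext (by simp only [Fin.val_mk]; exact hz0)
  symm
  refine Finset.card_bij (fun q hq => Phi n m (pn q.1 (m - 1)) q.1 q.2 h2m hmn
      ((mem_DD.mp hq).1.1) ((mem_DD.mp hq).1.2) rfl) ?_ ?_ ?_
  · intro q hq
    obtain ⟨⟨ht0, htm'⟩, hA1, hA2, hsum⟩ := mem_DD.mp hq
    rw [hS]
    have hsh := shape_easy _ (shape_Phi (μ := q.2) h2m hmn (mem_DD.mp hq).1.1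
      (mem_DD.mp hq).1.2 rfl)
    refine ⟨⟨?_, hsh.1, hsh.2, ?_⟩, ?_⟩
    · exact (avoids_Phi_iff h2m hmn _ _ rfl).mpr ⟨hA1, hA2⟩
    · rw [ides_Phi h2m hmn (mem_DD.mp hq).1.1 (mem_DD.mp hq).1.2 rfl]
      omega
    · rw [hzz, mval_Phi h2m hmn (mem_DD.mp hq).1.1 (mem_DD.mp hq).1.2 rfl]
      omega
  · intro q1 h1 q2 h2 heq
    have hinj := Phi_inj h2m hmn
      ((mem_DD.mp h1).1.1) ((mem_DD.mp h1).1.2) rfl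
      ((mem_DD.mp h2).1.1) ((mem_DD.mp h2).1.2) rfl heq
    exact Prod.ext hinj.1 hinj.2
  · intro π hπ
    rw [hS] at hπ
    obtain ⟨⟨hA, halt, hfl, hid⟩, hmv⟩ := hπ
    obtain ⟨a, b, hs⟩ := shape_hard π halt hfl
    have hz : ((π.symm z : Fin n) : ℕ) = n - 1 - b := by
      rw [hzz]; exact pos_zero hn π hs
    have hb1 : 1 ≤ a ∧ 1 ≤ b ∧ a + b ≤ n - 2 := ⟨hs.1, hs.2.1, hs.2.2.1⟩
    have hm : m = n - b := by omega
    obtain ⟨σ, μ, p2m, pmn, p0t, ptm, pts, hPhi⟩ := surj hn π hs hm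
    have hAΦ : AvoidsI (Phi n m a σ μ p2m pmn p0t ptm pts) := by rw [hPhi]; exact hA
    have hAv := (avoids_Phi_iff p2m pmn p0t ptm pts).mp hAΦ
    have hii : ides (Phi n m a σ μ p2m pmn p0t ptm pts) = k := by rw [hPhi]; exact hid
    rw [ides_Phi p2m pmn p0t ptm pts] at hii
    refine ⟨(σ, μ), ?_, ?_⟩
    · rw [mem_DD]
      exact ⟨⟨by rw [pts]; exact p0t, by rw [pts]; exact ptm⟩, hAv.1, hAv.2,
        show ides σ + ides μ = k - 1 from by omega⟩
    · subst pts
      exact hPhi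

end S11

open S11 in
theorem stmt_11' (n k : ℕ) (hn : 2 ≤ n) (hk : 1 ≤ k) :
    Nat.card {π : Equiv.Perm (Fin n) //
      AvoidsI π ∧ altEq π 3 ∧ FirstL π ∧ ides π = k} =
    ∑ m ∈ Finset.Icc 2 (n - 1), ∑ i ∈ Finset.range k,
      Nat.card {σ : Equiv.Perm (Fin m) // AvoidsI σ ∧
          (∃ a : Fin m, (a : ℕ) = m - 1 ∧
            0 < ((σ a : Fin m) : ℕ) ∧ ((σ a : Fin m) : ℕ) < m - 1) ∧
          ides σ = i} *
      Nat.card {μ : Equiv.Perm (Fin (n - m)) //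
          AvoidsI μ ∧ ides μ = k - 1 - i} := by
  classical
  have h0n : (0 : ℕ) < n := by omega
  rw [nat_card_subtype]
  rw [Finset.card_eq_sum_card_fiberwise
    (f := fun π : Equiv.Perm (Fin n) => ((π.symm ⟨0, h0n⟩ : Fin n) : ℕ) + 1)
    (t := Finset.Icc 2 (n - 1))
    (fun π hπ => by
      rw [Finset.mem_coe, Finset.mem_filter] at hπ
      obtain ⟨-, hA, halt, hfl, hid⟩ := hπ
      obtain ⟨a, b, hs⟩ := shape_hard π halt hfl
      have hz : ((π.symm ⟨0, h0n⟩ : Fin n) : ℕ) = n - 1 - b := pos_zero hn π hs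
      have hb1 : 1 ≤ a ∧ 1 ≤ b ∧ a + b ≤ n - 2 := ⟨hs.1, hs.2.1, hs.2.2.1⟩
      rw [Finset.mem_coe, Finset.mem_Icc]
      show 2 ≤ ((π.symm ⟨0, h0n⟩ : Fin n) : ℕ) + 1 ∧ ((π.symm ⟨0, h0n⟩ : Fin n) : ℕ) + 1 ≤ n - 1
      omega)]
  apply Finset.sum_congr rfl
  intro m hm
  rw [Finset.mem_Icc] at hm
  refine Eq.trans (fiber_eq n k m hn hk (by omega) (by omega) ⟨0, h0n⟩ rfl _ ?_)
    (inner_eq n k m hk (by omega)).symm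
  intro π
  simp only [Finset.mem_filter, Finset.mem_univ, true_and]

/-- with `I = {3124, 42153, 24153}`, for `n ≥ 2`, `k ≥ 1`, the number
of `π ∈ 𝔖ᴸ_{n,3}(I)` (class permutations with `alt = 3` whose word `w_π` starts
with `L`) having `ides = k` equals
`∑_{m=2}^{n−1} ∑_{i=0}^{k−1} |{σ ∈ 𝔖_m(I) : 1 < σ_m < m, ides σ = i}| ⬝
|{μ ∈ 𝔖_{n−m}(I) : ides μ = k−1−i}|` (0-based, `1 < σ_m < m` becomes
`0 < σ(last) < m − 1`). -/
theorem stmt_11 (n k : ℕ) (hn : 2 ≤ n) (hk : 1 ≤ k) :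
    Nat.card {π : Equiv.Perm (Fin n) //
      AvoidsI π ∧ altEq π 3 ∧ FirstL π ∧ ides π = k} =
    ∑ m ∈ Finset.Icc 2 (n - 1), ∑ i ∈ Finset.range k,
      Nat.card {σ : Equiv.Perm (Fin m) // AvoidsI σ ∧
          (∃ a : Fin m, (a : ℕ) = m - 1 ∧
            0 < ((σ a : Fin m) : ℕ) ∧ ((σ a : Fin m) : ℕ) < m - 1) ∧
          ides σ = i} *
      Nat.card {μ : Equiv.Perm (Fin (n - m)) //
          AvoidsI μ ∧ ides μ = k - 1 - i} := by
  exact stmt_11' n k hn hk
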